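/- arXiv:1011.1443 — 6 statements merged into one kernel-verified Lean document; each statement's English description precedes it below -/
import Mathlib

section
/- If H is a subdivision of a star graph K_{1,r}, then every subdivision of H contains H as a subgraph. -/
open SimpleGraph

/-- The degree of a vertex: the cardinality of its neighbor set. -/
noncomputable def degN (G : SimpleGraph ℕ) (v : ℕ) : ℕ := (G.neighborSet v).ncard

/-- An edge of `G` is *internal* if it lies on a cycle or on a path joining two
vertices of degree at least 3. -/
def InternalEdge (G : SimpleGraph ℕ) (e : Sym2 ℕ) : Prop :=
  e ∈ G.edgeSet ∧
    ((∃ (v : ℕ) (c : G.Walk v v), c.IsCycle ∧ e ∈ c.edges) ∨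
     (∃ (a b : ℕ) (p : G.Walk a b), p.IsPath ∧ e ∈ p.edges ∧
        3 ≤ degN G a ∧ 3 ≤ degN G b))

/-- `beta G` is the number of internal edges of `G`. -/
noncomputable def beta (G : SimpleGraph ℕ) : ℕ := {e | InternalEdge G e}.ncard

/-- `G` is obtained from `H` by one elementary subdivision: an edge `(u,v)` is
replaced by the two edges `(u,w)`, `(w,v)`, where `w` is a fresh (isolated)
vertex. -/
def ElemSubdiv (H G : SimpleGraph ℕ) : Prop :=
  ∃ u v w : ℕ, H.Adj u v ∧ H.neighborSet w = ∅ ∧ w ≠ u ∧ w ≠ v ∧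
    G = SimpleGraph.fromEdgeSet ((H.edgeSet \ {s(u, v)}) ∪ {s(u, w), s(w, v)})

/-- `G` is a subdivision of `H` if it is obtained from `H` by finitely many
elementary subdivisions. -/
def IsSubdivision (H G : SimpleGraph ℕ) : Prop := Relation.ReflTransGen ElemSubdiv H G

/-- `H` is (isomorphic to) a subgraph of `G`: there is an injective graph
homomorphism `H →g G`. -/
def SubgraphOf {V W : Type*} (H : SimpleGraph V) (G : SimpleGraph W) : Prop :=
  ∃ f : H →g G, Function.Injective f

/-- `H` is a topological minor of `G`: some subdivision of `H` is a subgraph of `G`. -/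
def TopMinorOf (H G : SimpleGraph ℕ) : Prop :=
  ∃ H' : SimpleGraph ℕ, IsSubdivision H H' ∧ SubgraphOf H' G

/-- `H` is a minor of `G`: there are pairwise disjoint nonempty connected branch
sets in `G`, one for each vertex of `H`, with an edge of `G` between the branch
sets of any two adjacent vertices of `H`. -/
def MinorOf {V W : Type*} (H : SimpleGraph V) (G : SimpleGraph W) : Prop :=
  ∃ φ : V → Set W,
    (∀ v, (φ v).Nonempty) ∧
    (∀ v, (G.induce (φ v)).Connected) ∧
    (∀ u v, u ≠ v → Disjoint (φ u) (φ v)) ∧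
    (∀ u v, H.Adj u v → ∃ a ∈ φ u, ∃ b ∈ φ v, G.Adj a b)

/-- The star `K_{1,r}` on vertex set `ℕ`: center `0` adjacent to `1, …, r`. -/
def starN (r : ℕ) : SimpleGraph ℕ :=
  SimpleGraph.fromEdgeSet {e | ∃ i : ℕ, 1 ≤ i ∧ i ≤ r ∧ e = s(0, i)}


open List


/-- the set of consecutive-pair edges of a list -/
def chainE : List ℕ → Set (Sym2 ℕ)
  | [] => ∅
  | [_] => ∅
  | a :: b :: t => insert s(a,b) (chainE (b :: t))

lemma chainE_nil : chainE [] = ∅ := rfl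
lemma chainE_single (a : ℕ) : chainE [a] = ∅ := rfl
lemma chainE_cons (a b : ℕ) (t : List ℕ) :
    chainE (a :: b :: t) = insert s(a,b) (chainE (b :: t)) := rfl

lemma mem_chainE_iff {e : Sym2 ℕ} {L : List ℕ} :
    e ∈ chainE L ↔ ∃ X a b Y, L = X ++ a :: b :: Y ∧ e = s(a,b) := by
  induction L with
  | nil =>
    simp only [chainE_nil, Set.mem_empty_iff_false, false_iff]
    rintro ⟨X, a, b, Y, h, -⟩
    apply_fun List.length at h
    simp at h
  | cons x t ih =>
    cases t with
    | nil =>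
      simp only [chainE_single, Set.mem_empty_iff_false, false_iff]
      rintro ⟨X, a, b, Y, h, -⟩
      apply_fun List.length at h
      simp at h; omega
    | cons y t' =>
      rw [chainE_cons]
      constructor
      · rintro (h | h)
        · exact ⟨[], x, y, t', by simp, h⟩
        · obtain ⟨X, a, b, Y, h1, h2⟩ := ih.mp h
          exact ⟨x :: X, a, b, Y, by simp [h1], h2⟩
      · rintro ⟨X, a, b, Y, h1, h2⟩
        cases X with
        | nil =>
          simp at h1
          obtain ⟨rfl, rfl, rfl⟩ := h1
          exact Or.inl h2
        | cons c X' =>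
          simp at h1
          obtain ⟨rfl, h1⟩ := h1
          exact Or.inr (ih.mpr ⟨X', a, b, Y, h1, h2⟩)

lemma chainE_split (X : List ℕ) (m : ℕ) (Y : List ℕ) :
    chainE (X ++ m :: Y) = chainE (X ++ [m]) ∪ chainE (m :: Y) := by
  induction X with
  | nil => simp [chainE_single]
  | cons a X ih =>
    cases X with
    | nil =>
      simp only [List.nil_append, List.cons_append, chainE_cons, chainE_single]
      ext e; simp
    | cons c X' =>
      simp only [List.cons_append, chainE_cons] at *
      rw [ih, Set.insert_union]

lemma mem_of_mem_chainE {e : Sym2 ℕ} {L : List ℕ} (h : e ∈ chainE L) :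
    ∀ x ∈ e, x ∈ L := by
  obtain ⟨X, a, b, Y, rfl, rfl⟩ := mem_chainE_iff.mp h
  intro x hx
  rcases Sym2.mem_iff.mp hx with rfl | rfl <;> simp

lemma chainE_prefix (X Y : List ℕ) : chainE X ⊆ chainE (X ++ Y) := by
  induction X with
  | nil => simp [chainE_nil]
  | cons a X ih =>
    cases X with
    | nil => simp [chainE_single]
    | cons c X' =>
      simp only [List.cons_append, chainE_cons] at *
      exact Set.insert_subset_insert ih

lemma chainE_map {p q : ℕ} {L : List ℕ} (f : ℕ → ℕ) (h : s(p,q) ∈ chainE L) :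
    s(f p, f q) ∈ chainE (L.map f) := by
  obtain ⟨X, a, b, Y, rfl, he⟩ := mem_chainE_iff.mp h
  rcases Sym2.eq_iff.mp he with ⟨rfl, rfl⟩ | ⟨rfl, rfl⟩
  · exact mem_chainE_iff.mpr ⟨X.map f, f p, f q, Y.map f, by simp, rfl⟩
  · rw [Sym2.eq_swap]
    exact mem_chainE_iff.mpr ⟨X.map f, f q, f p, Y.map f, by simp, rfl⟩

lemma not_isDiag_of_mem_chainE {e : Sym2 ℕ} {L : List ℕ} (hL : L.Nodup)
    (h : e ∈ chainE L) : ¬ e.IsDiag := by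
  obtain ⟨X, a, b, Y, rfl, rfl⟩ := mem_chainE_iff.mp h
  have : a ≠ b := by
    have hs : ([a, b] : List ℕ).Sublist (X ++ a :: b :: Y) := by
      have h1 : ([a, b] : List ℕ).Sublist (a :: b :: Y) := by
        simpa using List.sublist_append_left [a, b] Y
      exact h1.trans (List.sublist_append_right X _)
    have := hL.sublist hs
    simp at this
    exact this
  simpa using this

lemma mem_exists_adj {y : ℕ} {L : List ℕ} (hL : L.Nodup) (hlen : 2 ≤ L.length)
    (hy : y ∈ L) : ∃ z, z ≠ y ∧ s(y,z) ∈ chainE L := by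
  induction L with
  | nil => simp at hy
  | cons a t ih =>
    cases t with
    | nil => simp at hlen
    | cons b t' =>
      rw [chainE_cons]
      rcases List.mem_cons.mp hy with rfl | hy'
      · refine ⟨b, ?_, Or.inl rfl⟩
        intro hba; subst hba; simp at hL
      · cases t' with
        | nil =>
          simp at hy'; subst hy'
          refine ⟨a, ?_, Or.inl (Sym2.eq_swap)⟩
          intro h; subst h; simp at hL
        | cons c t'' =>
          obtain ⟨z, hz1, hz2⟩ := ih (List.Nodup.of_cons hL) (by simp) hy'
          exact ⟨z, hz1, Or.inr hz2⟩

/-- `shiftF U V x` maps the `j`-th element of `U` to the `j`-th element of `V`,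
and is the identity off `U`. -/
def shiftF : List ℕ → List ℕ → ℕ → ℕ
  | a :: U, c :: V, x => if x = a then c else shiftF U V x
  | _, _, x => x

lemma shiftF_not_mem : ∀ (U V : List ℕ) (x : ℕ), x ∉ U → shiftF U V x = x := by
  intro U
  induction U with
  | nil => intro V x _; cases V <;> rfl
  | cons a U ih =>
    intro V x hx
    cases V with
    | nil => rfl
    | cons c V =>
      simp only [shiftF]
      rw [if_neg (fun h => hx (by rw [h]; exact List.mem_cons_self))]
      exact ih V x (fun h => hx (List.mem_cons_of_mem a h))

lemma shiftF_mem : ∀ (U V : List ℕ) (x : ℕ), U.length ≤ V.length → x ∈ U →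
    shiftF U V x ∈ V := by
  intro U
  induction U with
  | nil => simp
  | cons a U ih =>
    intro V x hlen hx
    cases V with
    | nil => simp at hlen
    | cons c V =>
      simp only [shiftF]
      by_cases h : x = a
      · rw [if_pos h]; exact List.mem_cons_self
      · rw [if_neg h]
        exact List.mem_cons_of_mem c
          (ih V x (by simpa using Nat.le_of_succ_le_succ (by simpa using hlen))
            (by rcases List.mem_cons.mp hx with h' | h'; exact absurd h' h; exact h'))

lemma map_shiftF : ∀ (U V : List ℕ), U.length = V.length → U.Nodup →
    U.map (shiftF U V) = V := by
  intro U
  induction U with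
  | nil =>
    intro V h _
    cases V with
    | nil => rfl
    | cons c V => simp at h
  | cons a U ih =>
    intro V hlen hnd
    cases V with
    | nil => simp at hlen
    | cons c V =>
      simp only [List.map_cons, shiftF, if_pos rfl]
      congr 1
      have : U.map (fun x => if x = a then c else shiftF U V x) = U.map (shiftF U V) := by
        apply List.map_congr_left
        intro x hx
        have hxa : x ≠ a := fun h => (List.nodup_cons.mp hnd).1 (h ▸ hx)
        simp [if_neg hxa]
      rw [this]
      exact ih V (by simpa using hlen) (List.Nodup.of_cons hnd)

lemma shiftF_eq_cases : ∀ (U V : List ℕ), U.Nodup → V.Nodup →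
    U.length = V.length → ∀ x y, shiftF U V x = shiftF U V y →
    x = y ∨ (x ∉ U ∧ x ∈ V) ∨ (y ∉ U ∧ y ∈ V) := by
  intro U
  induction U with
  | nil =>
    intro V _ _ hlen x y h
    cases V with
    | nil => left; simpa [shiftF] using h
    | cons c V => simp at hlen
  | cons a U ih =>
    intro V hU hV hlen x y h
    cases V with
    | nil => simp at hlen
    | cons c V =>
      simp only [shiftF] at h
      by_cases hxa : x = a <;> by_cases hya : y = a
      · left; rw [hxa, hya]
      · rw [if_pos hxa, if_neg hya] at h
        by_cases hyU : y ∈ U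
        · exfalso
          have := shiftF_mem U V y (by simpa using hlen.le) hyU
          rw [← h] at this
          exact (List.nodup_cons.mp hV).1 this
        · rw [shiftF_not_mem U V y hyU] at h
          right; right
          exact ⟨by simp [hya, hyU], by simp [← h]⟩
      · rw [if_neg hxa, if_pos hya] at h
        by_cases hxU : x ∈ U
        · exfalso
          have := shiftF_mem U V x (by simpa using hlen.le) hxU
          rw [h] at this
          exact (List.nodup_cons.mp hV).1 this
        · rw [shiftF_not_mem U V x hxU] at h
          right; left
          exact ⟨by simp [hxa, hxU], by simp [h]⟩
      · rw [if_neg hxa, if_neg hya] at h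
        rcases ih V (List.Nodup.of_cons hU) (List.Nodup.of_cons hV)
            (by simpa using hlen) x y h with h' | ⟨h1, h2⟩ | ⟨h1, h2⟩
        · left; exact h'
        · right; left; exact ⟨by simp [hxa, h1], List.mem_cons_of_mem c h2⟩
        · right; right; exact ⟨by simp [hya, h1], List.mem_cons_of_mem c h2⟩

lemma shiftF_injective {U V : List ℕ} (hU : U.Nodup) (hV : V.Nodup)
    (hlen : U.length = V.length) (hsub : ∀ x, x ∈ V → x ∈ U) :
    Function.Injective (shiftF U V) := by
  intro x y h
  rcases shiftF_eq_cases U V hU hV hlen x y h with h' | ⟨h1, h2⟩ | ⟨h1, h2⟩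
  · exact h'
  · exact absurd (hsub x h2) h1
  · exact absurd (hsub y h2) h1

/-- the union of the chain edge sets of the branches -/
def starE (r : ℕ) (C : ℕ → List ℕ) : Set (Sym2 ℕ) :=
  ⋃ i ∈ {i : ℕ | 1 ≤ i ∧ i ≤ r}, chainE (C i)

lemma mem_starE {r : ℕ} {C : ℕ → List ℕ} {e : Sym2 ℕ} :
    e ∈ starE r C ↔ ∃ i, (1 ≤ i ∧ i ≤ r) ∧ e ∈ chainE (C i) := by
  simp [starE]

/-- `S` is a subdivision of the star `K_{1,r}` presented by explicit branch chains. -/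
def StarStruct (r : ℕ) (S : SimpleGraph ℕ) : Prop :=
  ∃ C : ℕ → List ℕ,
    (∀ i, 1 ≤ i → i ≤ r → ∃ t, C i = 0 :: t ∧ t ≠ [] ∧ t.Nodup ∧ 0 ∉ t) ∧
    (∀ i j, 1 ≤ i → i ≤ r → 1 ≤ j → j ≤ r → i ≠ j →
      ∀ x, x ∈ (C i).tail → x ∉ (C j).tail) ∧
    S = fromEdgeSet (starE r C)

lemma starStruct_starN (r : ℕ) : StarStruct r (starN r) := by
  refine ⟨fun i => [0, i], ?_, ?_, ?_⟩
  · intro i h1 _; exact ⟨[i], rfl, by simp, by simp, by simp; omega⟩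
  · intro i j _ _ _ _ hij x hx hx'
    simp at hx hx'; omega
  · unfold starN
    congr 1
    ext e
    simp only [mem_starE, Set.mem_setOf_eq, chainE_cons, chainE_single]
    aesop

lemma starStruct_step {r : ℕ} {S G : SimpleGraph ℕ}
    (hS : StarStruct r S) (h : ElemSubdiv S G) :
    StarStruct r G ∧ SubgraphOf S G := by
  obtain ⟨u, v, w, huv, hw, hwu, hwv, hGdef⟩ := h
  obtain ⟨C, hC, hdisj, hSdef⟩ := hS
  have hnd : ∀ i, 1 ≤ i → i ≤ r → (C i).Nodup := by
    intro i h1 h2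
    obtain ⟨t, ht, _, htnd, ht0⟩ := hC i h1 h2
    rw [ht]; exact List.nodup_cons.mpr ⟨ht0, htnd⟩
  have hlen2 : ∀ i, 1 ≤ i → i ≤ r → 2 ≤ (C i).length := by
    intro i h1 h2
    obtain ⟨t, ht, htne, -, -⟩ := hC i h1 h2
    rw [ht]
    cases t with
    | nil => simp at htne
    | cons c t' => simp
  have hSE : S.edgeSet = starE r C := by
    rw [hSdef, edgeSet_fromEdgeSet]
    ext e
    refine ⟨fun h => h.1, fun h => ⟨h, fun hd => ?_⟩⟩
    obtain ⟨j, ⟨h1, h2⟩, hej⟩ := mem_starE.mp h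
    exact not_isDiag_of_mem_chainE (hnd j h1 h2) hej hd
  have hSadj : ∀ x y, S.Adj x y ↔ s(x,y) ∈ starE r C ∧ x ≠ y := by
    intro x y; rw [hSdef]; exact SimpleGraph.fromEdgeSet_adj _
  have hwC : ∀ j, 1 ≤ j → j ≤ r → w ∉ C j := by
    intro j h1 h2 hmem
    obtain ⟨z, hz1, hz2⟩ := mem_exists_adj (hnd j h1 h2) (hlen2 j h1 h2) hmem
    have hadj : S.Adj w z :=
      (hSadj w z).mpr ⟨mem_starE.mpr ⟨j, ⟨h1, h2⟩, hz2⟩, Ne.symm hz1⟩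
    have : z ∈ S.neighborSet w := hadj
    rw [hw] at this
    exact this
  have hedge : s(u,v) ∈ starE r C := by rw [← hSE]; exact huv
  obtain ⟨i, ⟨hi1, hi2⟩, hei⟩ := mem_starE.mp hedge
  obtain ⟨X, a, b, Y, hdec, heq⟩ := mem_chainE_iff.mp hei
  obtain ⟨ti, hCi, htne, htnd, ht0⟩ := hC i hi1 hi2
  set T : List ℕ := b :: Y with hT
  have hndCi : (C i).Nodup := hnd i hi1 hi2
  have hndsplit : ((X ++ [a]) ++ T).Nodup := by
    rw [hT]; rw [hdec] at hndCi; simpa using hndCi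
  have hXa_T : ∀ z ∈ X ++ [a], z ∉ T := fun z hz hz' =>
    (List.disjoint_of_nodup_append hndsplit) hz hz'
  have hTnd : T.Nodup := (List.nodup_append.mp hndsplit).2.1
  have hXand : (X ++ [a]).Nodup := (List.nodup_append.mp hndsplit).1
  have hwCi : w ∉ C i := hwC i hi1 hi2
  have hTsubCi : ∀ z ∈ T, z ∈ C i := by
    intro z hz
    rw [hdec]
    exact List.mem_append_right X (List.mem_cons_of_mem a hz)
  have haCi : a ∈ C i := by rw [hdec]; simp
  have hwT : w ∉ T := fun hmem => hwCi (hTsubCi w hmem)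
  have hwa : w ≠ a := fun h => hwCi (h ▸ haCi)
  have h0ti : 0 :: ti = X ++ a :: b :: Y := by rw [← hCi, hdec]
  have hTti : ∀ x ∈ T, x ∈ ti := by
    intro x hx
    cases X with
    | nil =>
      simp at h0ti
      rw [h0ti.2]
      rwa [hT] at hx
    | cons c X' =>
      simp at h0ti
      rw [h0ti.2]
      refine List.mem_append_right X' (List.mem_cons_of_mem a ?_)
      rwa [hT] at hx
  have hw0 : w ≠ 0 := fun h => hwCi (by rw [h, hCi]; exact List.mem_cons_self)
  have hTnotj : ∀ j, 1 ≤ j → j ≤ r → j ≠ i → ∀ x ∈ T, x ∉ C j := by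
    intro j h1 h2 hji x hx hmem
    obtain ⟨tj, hCj, -, -, htj0⟩ := hC j h1 h2
    have hxt : x ∈ (C i).tail := by rw [hCi]; exact hTti x hx
    have hxnt : x ∉ (C j).tail := hdisj i j hi1 hi2 h1 h2 (Ne.symm hji) x hxt
    rw [hCj] at hmem hxnt
    rcases List.mem_cons.mp hmem with rfl | hmem'
    · exact ht0 (hTti _ hx)
    · exact hxnt hmem'
  set Ci' : List ℕ := X ++ a :: w :: T with hCi'def
  set C' : ℕ → List ℕ := fun j => if j = i then Ci' else C j with hC'def
  have hC'i : C' i = Ci' := by simp [hC'def]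
  have hC'j : ∀ j, j ≠ i → C' j = C j := fun j hj => by simp [hC'def, if_neg hj]
  have hA : chainE (C i) = chainE (X ++ [a]) ∪ insert s(a,b) (chainE T) := by
    rw [hdec, chainE_split X a T, hT, chainE_cons]
  have hA' : chainE Ci' = chainE (X ++ [a]) ∪
      insert s(a,w) (insert s(w,b) (chainE T)) := by
    rw [hCi'def, chainE_split X a (w :: T), hT, chainE_cons, chainE_cons]
  have hbT : b ∈ T := by rw [hT]; exact List.mem_cons_self
  have haXa : a ∈ X ++ [a] := by simp
  have hbXa : b ∉ X ++ [a] := fun hmem => hXa_T b hmem hbT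
  have haT : a ∉ T := hXa_T a haXa
  have habA : s(a,b) ∉ chainE (X ++ [a]) := fun hmem =>
    hbXa (mem_of_mem_chainE hmem b (by simp))
  have habT : s(a,b) ∉ chainE T := fun hmem =>
    haT (mem_of_mem_chainE hmem a (by simp))
  have habj : ∀ j, 1 ≤ j → j ≤ r → j ≠ i → s(a,b) ∉ chainE (C j) := by
    intro j h1 h2 hji hmem
    exact hTnotj j h1 h2 hji b hbT (mem_of_mem_chainE hmem b (by simp))
  have hpair : ({s(u,w), s(w,v)} : Set (Sym2 ℕ)) = {s(a,w), s(w,b)} := by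
    rcases Sym2.eq_iff.mp heq with ⟨rfl, rfl⟩ | ⟨rfl, rfl⟩
    · rfl
    · rw [show s(u,w) = s(w,u) from Sym2.eq_swap,
        show s(w,v) = s(v,w) from Sym2.eq_swap, Set.pair_comm]
  have hnewE : (S.edgeSet \ {s(u,v)}) ∪ {s(u,w), s(w,v)} = starE r C' := by
    rw [hSE, heq, hpair]
    ext e
    simp only [Set.mem_union, Set.mem_diff, Set.mem_singleton_iff,
      Set.mem_insert_iff, mem_starE]
    constructor
    · rintro (⟨⟨j, hj, hej⟩, hne⟩ | (rfl | rfl))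
      · by_cases hji : j = i
        · subst hji
          rw [hA] at hej
          rcases hej with h1 | h1
          · exact ⟨j, ⟨hi1, hi2⟩, by rw [hC'i, hA']; exact Or.inl h1⟩
          · rcases Set.mem_insert_iff.mp h1 with h2 | h2
            · exact absurd h2 hne
            · exact ⟨j, ⟨hi1, hi2⟩, by
                rw [hC'i, hA']
                exact Or.inr (Set.mem_insert_iff.mpr (Or.inr
                  (Set.mem_insert_iff.mpr (Or.inr h2))))⟩
        · exact ⟨j, hj, by rw [hC'j j hji]; exact hej⟩
      · exact ⟨i, ⟨hi1, hi2⟩, by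
          rw [hC'i, hA']
          exact Or.inr (Set.mem_insert_iff.mpr (Or.inl rfl))⟩
      · exact ⟨i, ⟨hi1, hi2⟩, by
          rw [hC'i, hA']
          exact Or.inr (Set.mem_insert_iff.mpr (Or.inr
            (Set.mem_insert_iff.mpr (Or.inl rfl))))⟩
    · rintro ⟨j, hj, hej⟩
      by_cases hji : j = i
      · subst hji
        rw [hC'i, hA'] at hej
        rcases hej with h1 | h1
        · refine Or.inl ⟨⟨j, ⟨hi1, hi2⟩, by rw [hA]; exact Or.inl h1⟩, ?_⟩
          intro he; exact habA (he ▸ h1)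
        · rcases Set.mem_insert_iff.mp h1 with h2 | h2
          · exact Or.inr (Or.inl h2)
          · rcases Set.mem_insert_iff.mp h2 with h3 | h3
            · exact Or.inr (Or.inr h3)
            · refine Or.inl ⟨⟨j, ⟨hi1, hi2⟩, by
                rw [hA]
                exact Or.inr (Set.mem_insert_iff.mpr (Or.inr h3))⟩, ?_⟩
              intro he; exact habT (he ▸ h3)
      · rw [hC'j j hji] at hej
        refine Or.inl ⟨⟨j, hj, hej⟩, ?_⟩
        intro he; exact habj j hj.1 hj.2 hji (he ▸ hej)
  have h0T : 0 ∉ T := fun h => ht0 (hTti 0 h)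
  have hwti : w ∉ ti := fun h => hwCi (by rw [hCi]; exact List.mem_cons_of_mem 0 h)
  have htailchar : ∀ x, x ∈ (C' i).tail ↔ (x = w ∨ x ∈ ti) := by
    intro x
    rw [hC'i, hCi'def]
    cases X with
    | nil =>
      simp only [List.nil_append, List.tail_cons]
      simp at h0ti
      rw [h0ti.2, ← hT]
      simp
    | cons c X' =>
      simp only [List.cons_append, List.tail_cons]
      simp at h0ti
      have hperm : (X' ++ [a]) ++ w :: T ~ w :: ((X' ++ [a]) ++ T) :=
        List.perm_middle
      have e1 : (X' ++ [a]) ++ w :: T = X' ++ a :: w :: T := by simp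
      have e2 : (X' ++ [a]) ++ T = ti := by rw [h0ti.2, hT]; simp
      rw [← e1, hperm.mem_iff, e2]
      simp
  have htailsub : ∀ k, 1 ≤ k → k ≤ r → ∀ y ∈ (C k).tail, y ∈ C k := by
    intro k h1 h2 y hy
    obtain ⟨tk, hCk, -, -, -⟩ := hC k h1 h2
    rw [hCk] at hy ⊢
    exact List.mem_cons_of_mem 0 hy
  have hstruct : StarStruct r G := by
    refine ⟨C', ?_, ?_, ?_⟩
    · intro j h1 h2
      by_cases hji : j = i
      · subst hji
        rw [hC'i, hCi'def]
        cases X with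
        | nil =>
          simp at h0ti
          refine ⟨w :: T, by simp [← h0ti.1], by simp, ?_, ?_⟩
          · exact List.nodup_cons.mpr ⟨hwT, hTnd⟩
          · simp only [List.mem_cons, not_or]
            exact ⟨Ne.symm hw0, h0T⟩
        | cons c X' =>
          simp at h0ti
          refine ⟨X' ++ a :: w :: T, by simp [← h0ti.1], by simp, ?_, ?_⟩
          · have hperm : (X' ++ [a]) ++ w :: T ~ w :: ((X' ++ [a]) ++ T) :=
              List.perm_middle
            have e1 : (X' ++ [a]) ++ w :: T = X' ++ a :: w :: T := by simp
            have e2 : (X' ++ [a]) ++ T = ti := by rw [h0ti.2, hT]; simp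
            rw [← e1]
            refine hperm.nodup_iff.mpr ?_
            rw [e2]
            exact List.nodup_cons.mpr ⟨hwti, htnd⟩
          · have hperm : (X' ++ [a]) ++ w :: T ~ w :: ((X' ++ [a]) ++ T) :=
              List.perm_middle
            have e1 : (X' ++ [a]) ++ w :: T = X' ++ a :: w :: T := by simp
            have e2 : (X' ++ [a]) ++ T = ti := by rw [h0ti.2, hT]; simp
            rw [← e1, hperm.mem_iff, e2]
            simp only [List.mem_cons, not_or]
            exact ⟨Ne.symm hw0, ht0⟩
      · rw [hC'j j hji]
        exact hC j h1 h2
    · intro j k h1 h2 h3 h4 hjk x hx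
      by_cases hji : j = i
      · subst hji
        have hx' := (htailchar x).mp hx
        rw [hC'j k (Ne.symm hjk)]
        rcases hx' with rfl | hx''
        · exact fun hmem => hwC k h3 h4 (htailsub k h3 h4 x hmem)
        · have hxx : x ∈ (C j).tail := by rw [hCi]; exact hx''
          exact hdisj j k h1 h2 h3 h4 hjk x hxx
      · rw [hC'j j hji] at hx
        by_cases hki : k = i
        · subst hki
          intro hmem
          rcases (htailchar x).mp hmem with rfl | hx''
          · exact hwC j h1 h2 (htailsub j h1 h2 x hx)
          · have : x ∈ (C k).tail := by rw [hCi]; exact hx''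
            exact hdisj k j h3 h4 h1 h2 (Ne.symm hjk) x this hx
        · rw [hC'j k hki]
          exact hdisj j k h1 h2 h3 h4 hjk x hx
    · rw [hGdef, hnewE]
  set U : List ℕ := T ++ [w] with hU
  set V : List ℕ := w :: T with hV
  have hUnd : U.Nodup := by
    rw [hU, List.nodup_append]
    exact ⟨hTnd, List.nodup_singleton w, fun x hx => by simp; rintro rfl; exact hwT hx⟩
  have hVnd : V.Nodup := List.nodup_cons.mpr ⟨hwT, hTnd⟩
  have hlenUV : U.length = V.length := by rw [hU, hV]; simp
  have hsubVU : ∀ x, x ∈ V → x ∈ U := by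
    intro x hx
    rw [hV] at hx; rw [hU]
    rcases List.mem_cons.mp hx with rfl | h
    · simp
    · simp [h]
  set f := shiftF U V with hf
  have hinj : Function.Injective f := shiftF_injective hUnd hVnd hlenUV hsubVU
  have hfid : ∀ x, x ∉ T → x ≠ w → f x = x := by
    intro x h1 h2
    apply shiftF_not_mem
    rw [hU]
    simp [h1, h2]
  have hfb : f b = w := by
    rw [hf, hU, hV, hT]
    show shiftF ((b :: Y) ++ [w]) (w :: b :: Y) b = w
    rw [List.cons_append]
    simp [shiftF]
  have hfa : f a = a := hfid a haT (fun h => hwa h.symm)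
  have hmapU : U.map f = V := map_shiftF U V hlenUV hUnd
  have hTV : T.map f ++ [f w] = V := by rw [← hmapU, hU]; simp
  have hchainTV : chainE (T.map f) ⊆ chainE V := by
    rw [← hTV]; exact chainE_prefix _ _
  have hVCi' : chainE V ⊆ chainE Ci' := by
    rw [hCi'def, chainE_split X a (w :: T), hV]
    intro e he
    exact Or.inr (Set.mem_insert_of_mem _ he)
  have hawCi' : s(a,w) ∈ chainE Ci' := by
    rw [hCi'def, chainE_split X a (w :: T)]
    exact Or.inr (Set.mem_insert _ _)
  have hXaCi' : chainE (X ++ [a]) ⊆ chainE Ci' := by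
    rw [hCi'def, chainE_split X a (w :: T)]
    exact Set.subset_union_left
  have hXasubCi : ∀ z ∈ X ++ [a], z ∈ C i := by
    intro z hz
    rw [hdec]
    rcases List.mem_append.mp hz with h | h
    · exact List.mem_append_left _ h
    · simp at h
      rw [h]
      exact List.mem_append_right _ List.mem_cons_self
  have hGadj : ∀ p q, s(p,q) ∈ starE r C' → p ≠ q → G.Adj p q := by
    intro p q h1 h2
    rw [hGdef, hnewE]
    exact (SimpleGraph.fromEdgeSet_adj _).mpr ⟨h1, h2⟩
  have hsub : SubgraphOf S G := by
    refine ⟨⟨f, ?_⟩, hinj⟩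
    intro x y hxy
    have hne : f x ≠ f y := fun hh => hxy.ne (hinj hh)
    apply hGadj _ _ ?_ hne
    have hxyE : s(x,y) ∈ starE r C := ((hSadj x y).mp hxy).1
    obtain ⟨j, hj, hej⟩ := mem_starE.mp hxyE
    by_cases hji : j = i
    · subst hji
      rw [hA] at hej
      rcases hej with h1 | h1
      · have hx' : x ∈ X ++ [a] := mem_of_mem_chainE h1 x (by simp)
        have hy' : y ∈ X ++ [a] := mem_of_mem_chainE h1 y (by simp)
        rw [hfid x (hXa_T x hx') (fun h => hwCi (h ▸ hXasubCi x hx')),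
          hfid y (hXa_T y hy') (fun h => hwCi (h ▸ hXasubCi y hy'))]
        exact mem_starE.mpr ⟨j, ⟨hi1, hi2⟩, by rw [hC'i]; exact hXaCi' h1⟩
      · rcases Set.mem_insert_iff.mp h1 with h2 | h2
        · rcases Sym2.eq_iff.mp h2 with ⟨rfl, rfl⟩ | ⟨rfl, rfl⟩
          · rw [hfa, hfb]
            exact mem_starE.mpr ⟨j, ⟨hi1, hi2⟩, by rw [hC'i]; exact hawCi'⟩
          · rw [hfa, hfb, Sym2.eq_swap]
            exact mem_starE.mpr ⟨j, ⟨hi1, hi2⟩, by rw [hC'i]; exact hawCi'⟩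
        · have hmapped := chainE_map f h2
          exact mem_starE.mpr ⟨j, ⟨hi1, hi2⟩,
            by rw [hC'i]; exact hVCi' (hchainTV hmapped)⟩
    · have hx' : x ∈ C j := mem_of_mem_chainE hej x (by simp)
      have hy' : y ∈ C j := mem_of_mem_chainE hej y (by simp)
      have hxT : x ∉ T := fun h => hTnotj j hj.1 hj.2 hji x h hx'
      have hyT : y ∉ T := fun h => hTnotj j hj.1 hj.2 hji y h hy'
      have hxw : x ≠ w := fun h => hwC j hj.1 hj.2 (h ▸ hx')
      have hyw : y ≠ w := fun h => hwC j hj.1 hj.2 (h ▸ hy')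
      rw [hfid x hxT hxw, hfid y hyT hyw]
      exact mem_starE.mpr ⟨j, hj, by rw [hC'j j hji]; exact hej⟩
  exact ⟨hstruct, hsub⟩

lemma subgraphOf_refl (H : SimpleGraph ℕ) : SubgraphOf H H :=
  ⟨SimpleGraph.Hom.id, fun _ _ h => h⟩

lemma subgraphOf_trans {A B D : SimpleGraph ℕ} (h1 : SubgraphOf A B)
    (h2 : SubgraphOf B D) : SubgraphOf A D := by
  obtain ⟨f, hf⟩ := h1
  obtain ⟨g, hg⟩ := h2
  exact ⟨g.comp f, hg.comp hf⟩

lemma starStruct_subdiv {r : ℕ} {S G : SimpleGraph ℕ}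
    (hS : StarStruct r S) (h : IsSubdivision S G) :
    StarStruct r G ∧ SubgraphOf S G := by
  induction h with
  | refl => exact ⟨hS, subgraphOf_refl S⟩
  | tail _ hstep ih =>
    obtain ⟨h1, h2⟩ := ih
    obtain ⟨h3, h4⟩ := starStruct_step h1 hstep
    exact ⟨h3, subgraphOf_trans h2 h4⟩

/-- If `H` is a subdivision of a star `K_{1,r}`, then every subdivision of `H`
contains `H` as a subgraph. -/
theorem subdivision_of_star_subgraph_of_subdivision (r : ℕ) (H G : SimpleGraph ℕ)
    (hH : IsSubdivision (starN r) H) (hG : IsSubdivision H G) :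
    SubgraphOf H G := by
  have hHs : StarStruct r H := (starStruct_subdiv (starStruct_starN r) hH).1
  exact (starStruct_subdiv hHs hG).2
end

section
/- Let β(G) be the number of internal edges of G (edges lying on a cycle or on a path between two vertices of degree ≥ 3). If G is obtained from H by an elementary subdivision, then β(H) ≤ β(G). -/
open SimpleGraph

section Aux
namespace SubdivAux
open Walk


variable {H G : SimpleGraph ℕ} {u v w : ℕ}

lemma adj_aw (huw : G.Adj u w) (hwv : G.Adj w v) {a c : ℕ}
    (he : s(a, c) = s(u, v)) : G.Adj a w := by
  rcases Sym2.eq_iff.1 he with ⟨rfl, rfl⟩ | ⟨rfl, rfl⟩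
  · exact huw
  · exact hwv.symm

lemma adj_wc (huw : G.Adj u w) (hwv : G.Adj w v) {a c : ℕ}
    (he : s(a, c) = s(u, v)) : G.Adj w c := by
  rcases Sym2.eq_iff.1 he with ⟨rfl, rfl⟩ | ⟨rfl, rfl⟩
  · exact hwv
  · exact huw.symm

def subdivWalk (huw : G.Adj u w) (hwv : G.Adj w v)
    (hkeep : ∀ {a b : ℕ}, H.Adj a b → s(a, b) ≠ s(u, v) → G.Adj a b) :
    ∀ {a b : ℕ}, H.Walk a b → G.Walk a b
  | _, _, .nil => .nil
  | a, _, @Walk.cons _ _ _ c _ h p =>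
    if he : s(a, c) = s(u, v) then
      .cons (adj_aw huw hwv he) (.cons (adj_wc huw hwv he) (subdivWalk huw hwv hkeep p))
    else .cons (hkeep h he) (subdivWalk huw hwv hkeep p)

variable (huw : G.Adj u w) (hwv : G.Adj w v)
    (hkeep : ∀ {a b : ℕ}, H.Adj a b → s(a, b) ≠ s(u, v) → G.Adj a b)

lemma edges_subset : ∀ {a b : ℕ} (p : H.Walk a b) (e : Sym2 ℕ),
    e ∈ (subdivWalk huw hwv hkeep p).edges → e = s(u, w) ∨ e = s(w, v) ∨ e ∈ p.edges := by
  intro a b p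
  induction p with
  | nil => intro e he; simp [subdivWalk] at he
  | cons h p ih =>
    intro e he
    rw [subdivWalk] at he
    split at he
    · rename_i heq
      simp only [edges_cons, List.mem_cons] at he
      rcases he with rfl | rfl | he
      · rcases Sym2.eq_iff.1 heq with ⟨rfl, rfl⟩ | ⟨rfl, rfl⟩
        · exact Or.inl rfl
        · exact Or.inr (Or.inl Sym2.eq_swap)
      · rcases Sym2.eq_iff.1 heq with ⟨rfl, rfl⟩ | ⟨rfl, rfl⟩
        · exact Or.inr (Or.inl rfl)
        · exact Or.inl Sym2.eq_swap
      · rcases ih e he with h1 | h1 | h1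
        · exact Or.inl h1
        · exact Or.inr (Or.inl h1)
        · exact Or.inr (Or.inr (by simp [h1]))
    · simp only [edges_cons, List.mem_cons] at he
      rcases he with rfl | he
      · exact Or.inr (Or.inr (by simp))
      · rcases ih e he with h1 | h1 | h1
        · exact Or.inl h1
        · exact Or.inr (Or.inl h1)
        · exact Or.inr (Or.inr (by simp [h1]))

lemma support_subset : ∀ {a b : ℕ} (p : H.Walk a b) (x : ℕ),
    x ∈ (subdivWalk huw hwv hkeep p).support → x = w ∨ x ∈ p.support := by
  intro a b p
  induction p with
  | nil => intro x hx; rw [subdivWalk] at hx; exact Or.inr (by simpa using hx)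
  | cons h p ih =>
    intro x hx
    rw [subdivWalk] at hx
    split at hx
    · simp only [support_cons, List.mem_cons] at hx
      rcases hx with rfl | rfl | hx
      · exact Or.inr (by simp)
      · exact Or.inl rfl
      · rcases ih x hx with h1 | h1
        · exact Or.inl h1
        · exact Or.inr (by simp [h1])
    · simp only [support_cons, List.mem_cons] at hx
      rcases hx with rfl | hx
      · exact Or.inr (by simp)
      · rcases ih x hx with h1 | h1
        · exact Or.inl h1
        · exact Or.inr (by simp [h1])

lemma subdiv_of_not_mem : ∀ {a b : ℕ} (p : H.Walk a b), s(u, v) ∉ p.edges →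
    (subdivWalk huw hwv hkeep p).edges = p.edges ∧
    (subdivWalk huw hwv hkeep p).support = p.support := by
  intro a b p
  induction p with
  | nil => intro _; rw [subdivWalk]; simp
  | cons h p ih =>
    intro hne
    rw [edges_cons, List.mem_cons] at hne
    push_neg at hne
    obtain ⟨h1, h2⟩ := hne
    rw [subdivWalk]
    split
    · rename_i heq
      exact (h1 heq.symm).elim
    · obtain ⟨he, hs⟩ := ih h2
      simp [he, hs]

lemma mem_edges_subdiv : ∀ {a b : ℕ} (p : H.Walk a b) (e : Sym2 ℕ),
    e ∈ p.edges → e ≠ s(u, v) → e ∈ (subdivWalk huw hwv hkeep p).edges := by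
  intro a b p
  induction p with
  | nil => intro e he; simp at he
  | cons h p ih =>
    intro e he hne
    rw [edges_cons, List.mem_cons] at he
    rw [subdivWalk]
    split
    · rename_i heq
      rcases he with rfl | he
      · exact absurd heq hne
      · simp only [edges_cons, List.mem_cons]
        exact Or.inr (Or.inr (ih e he hne))
    · rcases he with rfl | he
      · simp
      · simp only [edges_cons, List.mem_cons]
        exact Or.inr (ih e he hne)

lemma uw_mem_edges_subdiv : ∀ {a b : ℕ} (p : H.Walk a b),
    s(u, v) ∈ p.edges → s(u, w) ∈ (subdivWalk huw hwv hkeep p).edges := by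
  intro a b p
  induction p with
  | nil => intro he; simp at he
  | cons h p ih =>
    intro he
    rw [edges_cons, List.mem_cons] at he
    rw [subdivWalk]
    split
    · rename_i heq
      rcases Sym2.eq_iff.1 heq with ⟨rfl, rfl⟩ | ⟨rfl, rfl⟩
      · simp
      · simp only [edges_cons, List.mem_cons]
        exact Or.inr (Or.inl Sym2.eq_swap)
    · rename_i hne
      rcases he with heq | he
      · exact absurd heq.symm hne
      · simp only [edges_cons, List.mem_cons]
        exact Or.inr (ih he)

lemma isPath_subdiv : ∀ {a b : ℕ} (p : H.Walk a b), w ∉ p.support → p.IsPath →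
    (subdivWalk huw hwv hkeep p).IsPath := by
  intro a b p
  induction p with
  | nil => intro _ _; rw [subdivWalk]; exact IsPath.nil
  | cons h p ih =>
    intro hws hp
    rw [support_cons, List.mem_cons] at hws
    push_neg at hws
    obtain ⟨hwa, hwp⟩ := hws
    rw [cons_isPath_iff] at hp
    obtain ⟨hp, hap⟩ := hp
    rw [subdivWalk]
    split
    · rename_i heq
      have huvp : s(u, v) ∉ p.edges := by
        intro hmem
        rw [← heq] at hmem
        exact hap (p.fst_mem_support_of_mem_edges hmem)
      obtain ⟨he, hs⟩ := subdiv_of_not_mem huw hwv hkeep p huvp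
      rw [cons_isPath_iff, cons_isPath_iff]
      refine ⟨⟨?_, ?_⟩, ?_⟩
      · rw [isPath_def, hs]; exact hp.support_nodup
      · rw [hs]; exact hwp
      · rw [support_cons, List.mem_cons, hs]
        push_neg
        exact ⟨Ne.symm hwa, hap⟩
    · rw [cons_isPath_iff]
      refine ⟨ih hwp hp, fun hmem => ?_⟩
      rcases support_subset huw hwv hkeep p _ hmem with rfl | hmem
      · exact hwa rfl
      · exact hap hmem

lemma isCycle_subdiv {x : ℕ} (c : H.Walk x x) (hws : w ∉ c.support) (hc : c.IsCycle) :
    (subdivWalk huw hwv hkeep c).IsCycle := by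
  cases c with
  | nil => exact absurd rfl hc.ne_nil
  | cons h p =>
    rw [cons_isCycle_iff] at hc
    obtain ⟨hp, hne⟩ := hc
    rw [support_cons, List.mem_cons] at hws
    push_neg at hws
    obtain ⟨hwx, hwp⟩ := hws
    rw [subdivWalk]
    split
    · rename_i heq
      have huvp : s(u, v) ∉ p.edges := by rw [← heq]; exact hne
      obtain ⟨he, hs⟩ := subdiv_of_not_mem huw hwv hkeep p huvp
      rw [cons_isCycle_iff]
      constructor
      · rw [cons_isPath_iff]
        refine ⟨?_, ?_⟩
        · rw [isPath_def, hs]; exact hp.support_nodup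
        · rw [hs]; exact hwp
      · rw [edges_cons, List.mem_cons, he]
        push_neg
        constructor
        · intro habs
          rcases Sym2.eq_iff.1 habs with ⟨rfl, _⟩ | ⟨hxc, _⟩
          · exact hwx rfl
          · exact h.ne hxc
        · intro habs
          have : w ∈ p.support := by
            rw [Sym2.eq_swap] at habs
            exact p.fst_mem_support_of_mem_edges habs
          exact hwp this
    · rename_i hneq
      rw [cons_isCycle_iff]
      refine ⟨isPath_subdiv huw hwv hkeep p hwp hp, fun habs => ?_⟩
      rcases edges_subset huw hwv hkeep p _ habs with h1 | h1 | h1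
      · rcases Sym2.eq_iff.1 h1 with ⟨rfl, rfl⟩ | ⟨rfl, rfl⟩
        · exact hwp p.start_mem_support
        · exact hwx rfl
      · rcases Sym2.eq_iff.1 h1 with ⟨rfl, rfl⟩ | ⟨_, rfl⟩
        · exact hwx rfl
        · exact hwp p.start_mem_support
      · exact hne h1

lemma w_eq_end_of_mem_support (hiso : ∀ x, ¬ H.Adj w x) :
    ∀ {a b : ℕ} (p : H.Walk a b), w ∈ p.support → w = b := by
  intro a b p
  induction p with
  | nil => intro hx; simpa using hx
  | cons h p ih =>
    intro hx
    rw [support_cons, List.mem_cons] at hx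
    rcases hx with rfl | hx
    · exact absurd h (hiso _)
    · exact ih hx


end SubdivAux


/-- An elementary subdivision cannot decrease the number of internal edges:
if `G` is obtained from the finite graph `H` by an elementary subdivision,
then `β(H) ≤ β(G)`. -/
theorem beta_le_of_elemSubdiv (H G : SimpleGraph ℕ) (hfin : H.edgeSet.Finite)
    (h : ElemSubdiv H G) : beta H ≤ beta G := by
  obtain ⟨u, v, w, huv, hwiso, hwu, hwv, rfl⟩ := h
  set S : Set (Sym2 ℕ) := (H.edgeSet \ {s(u, v)}) ∪ {s(u, w), s(w, v)} with hS
  set G' : SimpleGraph ℕ := SimpleGraph.fromEdgeSet S with hG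
  have hiso : ∀ x, ¬ H.Adj w x := by
    intro x hx
    have : x ∈ H.neighborSet w := hx
    rw [hwiso] at this
    exact this
  have huwS : s(u, w) ∈ S := Or.inr (Or.inl rfl)
  have hwvS : s(w, v) ∈ S := Or.inr (Or.inr rfl)
  have hGuw : G'.Adj u w := by
    rw [hG, fromEdgeSet_adj]; exact ⟨huwS, Ne.symm hwu⟩
  have hGwv : G'.Adj w v := by
    rw [hG, fromEdgeSet_adj]; exact ⟨hwvS, hwv⟩
  have hkeep : ∀ {a b : ℕ}, H.Adj a b → s(a, b) ≠ s(u, v) → G'.Adj a b := by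
    intro a b hab hne
    rw [hG, fromEdgeSet_adj]
    exact ⟨Or.inl ⟨hab, hne⟩, hab.ne⟩
  have hwH : ∀ e ∈ H.edgeSet, w ∉ e := by
    intro e he
    induction e with
    | _ a b =>
      intro hmem
      rw [H.mem_edgeSet] at he
      rcases Sym2.mem_iff.1 hmem with rfl | rfl
      · exact hiso _ he
      · exact hiso _ he.symm
  have hdegw : degN H w = 0 := by simp [degN, hwiso]
  have hnfin : ∀ a, (H.neighborSet a).Finite := by
    intro a
    apply Set.Finite.of_finite_image (f := fun x => s(a, x))
    · apply hfin.subset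
      rintro _ ⟨x, hx, rfl⟩
      exact H.mem_edgeSet.2 hx
    · intro x _ y _ hxy
      exact Sym2.congr_right.1 hxy
  -- neighbor set characterizations
  have hNu : G'.neighborSet u = insert w (H.neighborSet u \ {v}) := by
    ext x
    simp only [mem_neighborSet, hG, fromEdgeSet_adj, Set.mem_insert_iff, Set.mem_diff,
      Set.mem_singleton_iff]
    constructor
    · rintro ⟨hmem, hne⟩
      rcases hmem with ⟨hH, hne2⟩ | hx | hx
      · refine Or.inr ⟨H.mem_edgeSet.1 hH, fun hxv => ?_⟩
        exact hne2 (by rw [hxv]; exact rfl)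
      · rcases Sym2.eq_iff.1 hx with ⟨-, rfl⟩ | ⟨huw', -⟩
        · exact Or.inl rfl
        · exact absurd huw'.symm hwu
      · rcases Sym2.eq_iff.1 hx with ⟨huw', -⟩ | ⟨huv', -⟩
        · exact absurd huw'.symm hwu
        · exact absurd huv' huv.ne
    · rintro (rfl | ⟨hadj, hxv⟩)
      · exact ⟨huwS, Ne.symm hwu⟩
      · refine ⟨Or.inl ⟨H.mem_edgeSet.2 hadj, fun habs => ?_⟩, hadj.ne⟩
        rcases Sym2.eq_iff.1 habs with ⟨-, h2⟩ | ⟨h2, -⟩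
        · exact hxv h2
        · exact huv.ne h2
  have hNv : G'.neighborSet v = insert w (H.neighborSet v \ {u}) := by
    ext x
    simp only [mem_neighborSet, hG, fromEdgeSet_adj, Set.mem_insert_iff, Set.mem_diff,
      Set.mem_singleton_iff]
    constructor
    · rintro ⟨hmem, hne⟩
      rcases hmem with ⟨hH, hne2⟩ | hx | hx
      · refine Or.inr ⟨H.mem_edgeSet.1 hH, fun hxu => ?_⟩
        exact hne2 (by rw [hxu, Sym2.eq_swap]; exact rfl)
      · rcases Sym2.eq_iff.1 hx with ⟨hvu, -⟩ | ⟨hvw, -⟩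
        · exact absurd hvu.symm huv.ne
        · exact absurd hvw.symm hwv
      · rcases Sym2.eq_iff.1 hx with ⟨hvw, -⟩ | ⟨-, rfl⟩
        · exact absurd hvw.symm hwv
        · exact Or.inl rfl
    · rintro (rfl | ⟨hadj, hxu⟩)
      · exact ⟨by rw [Sym2.eq_swap]; exact hwvS, fun h => hwv h.symm⟩
      · refine ⟨Or.inl ⟨H.mem_edgeSet.2 hadj, fun habs => ?_⟩, hadj.ne⟩
        rcases Sym2.eq_iff.1 habs with ⟨hvu, -⟩ | ⟨-, h2⟩
        · exact huv.ne hvu.symm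
        · exact hxu h2
  have hNother : ∀ a, a ≠ u → a ≠ v → a ≠ w → G'.neighborSet a = H.neighborSet a := by
    intro a hau hav haw
    ext x
    simp only [mem_neighborSet, hG, fromEdgeSet_adj]
    constructor
    · rintro ⟨hmem, hne⟩
      rcases hmem with ⟨hH, -⟩ | hx | hx
      · exact H.mem_edgeSet.1 hH
      · rcases Sym2.eq_iff.1 hx with ⟨h1, -⟩ | ⟨h1, -⟩
        · exact absurd h1 hau
        · exact absurd h1 haw
      · rcases Sym2.eq_iff.1 hx with ⟨h1, -⟩ | ⟨h1, -⟩
        · exact absurd h1 haw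
        · exact absurd h1 hav
    · intro hadj
      refine ⟨Or.inl ⟨H.mem_edgeSet.2 hadj, fun habs => ?_⟩, hadj.ne⟩
      rcases Sym2.eq_iff.1 habs with ⟨h1, -⟩ | ⟨h1, -⟩
      · exact hau h1
      · exact hav h1
  have hdegu : degN G' u = degN H u := by
    rw [degN, degN, hNu, Set.ncard_insert_of_notMem ?_ (hnfin u).diff]
    · exact Set.ncard_diff_singleton_add_one (show v ∈ H.neighborSet u from huv) (hnfin u)
    · rintro ⟨hadj, -⟩
      have hadj' : H.Adj u w := hadj
      exact hiso u hadj'.symm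
  have hdegv : degN G' v = degN H v := by
    rw [degN, degN, hNv, Set.ncard_insert_of_notMem ?_ (hnfin v).diff]
    · exact Set.ncard_diff_singleton_add_one (show u ∈ H.neighborSet v from huv.symm) (hnfin v)
    · rintro ⟨hadj, -⟩
      have hadj' : H.Adj v w := hadj
      exact hiso v hadj'.symm
  have hdeg3 : ∀ a, 3 ≤ degN H a → 3 ≤ degN G' a := by
    intro a ha3
    have haw : a ≠ w := by rintro rfl; omega
    by_cases hau : a = u
    · subst hau; rwa [hdegu]
    · by_cases hav : a = v
      · subst hav; rwa [hdegv]
      · rwa [degN, hNother a hau hav haw]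
  have hSfin : S.Finite := hfin.diff.union ((Set.finite_singleton _).insert _)
  have hGfin : {e | InternalEdge G' e}.Finite := by
    apply hSfin.subset
    intro e he
    have : e ∈ G'.edgeSet := he.1
    rw [hG, edgeSet_fromEdgeSet] at this
    exact this.1
  set f : Sym2 ℕ → Sym2 ℕ := fun e => if e = s(u, v) then s(u, w) else e with hf
  have hwuw : w ∈ s(u, w) := Sym2.mem_mk_right u w
  have hinj : Set.InjOn f {e | InternalEdge H e} := by
    intro e1 h1 e2 h2 heq
    by_cases k1 : e1 = s(u, v) <;> by_cases k2 : e2 = s(u, v) <;>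
      simp only [hf, if_pos, if_neg, k1, k2, if_true, if_false, reduceIte] at heq
    · rw [k1, k2]
    · exact absurd (heq ▸ hwuw) (hwH e2 h2.1)
    · exact absurd (heq ▸ hwuw) (hwH e1 h1.1)
    · exact heq
  have hmaps : ∀ e, InternalEdge H e → InternalEdge G' (f e) := by
    rintro e ⟨heH, hcase⟩
    have hcycsup : ∀ (x : ℕ) (c : H.Walk x x), c.IsCycle → w ∉ c.support := by
      intro x c hc hmem
      have hwx := SubdivAux.w_eq_end_of_mem_support hiso c hmem
      subst hwx
      cases c with
      | nil => exact hc.ne_nil rfl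
      | cons h p => exact hiso _ h
    by_cases heuv : e = s(u, v)
    · have hfe : f e = s(u, w) := by rw [hf]; simp [heuv]
      rw [hfe]
      refine ⟨?_, ?_⟩
      · rw [hG, edgeSet_fromEdgeSet]
        exact ⟨huwS, by simp [Sym2.mk_isDiag_iff, Ne.symm hwu]⟩
      · rcases hcase with ⟨x, c, hc, hec⟩ | ⟨a, b, p, hp, hep, ha3, hb3⟩
        · left
          have hwc := hcycsup x c hc
          exact ⟨x, SubdivAux.subdivWalk hGuw hGwv hkeep c,
            SubdivAux.isCycle_subdiv hGuw hGwv hkeep c hwc hc,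
            SubdivAux.uw_mem_edges_subdiv hGuw hGwv hkeep c (heuv ▸ hec)⟩
        · right
          have hwp : w ∉ p.support := by
            intro hmem
            have hwb := SubdivAux.w_eq_end_of_mem_support hiso p hmem
            rw [← hwb, hdegw] at hb3
            omega
          exact ⟨a, b, SubdivAux.subdivWalk hGuw hGwv hkeep p,
            SubdivAux.isPath_subdiv hGuw hGwv hkeep p hwp hp,
            SubdivAux.uw_mem_edges_subdiv hGuw hGwv hkeep p (heuv ▸ hep),
            hdeg3 a ha3, hdeg3 b hb3⟩
    · have hfe : f e = e := by rw [hf]; simp [heuv]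
      rw [hfe]
      refine ⟨?_, ?_⟩
      · rw [hG, edgeSet_fromEdgeSet]
        exact ⟨Or.inl ⟨heH, by simpa using heuv⟩, H.not_isDiag_of_mem_edgeSet heH⟩
      · rcases hcase with ⟨x, c, hc, hec⟩ | ⟨a, b, p, hp, hep, ha3, hb3⟩
        · left
          have hwc := hcycsup x c hc
          exact ⟨x, SubdivAux.subdivWalk hGuw hGwv hkeep c,
            SubdivAux.isCycle_subdiv hGuw hGwv hkeep c hwc hc,
            SubdivAux.mem_edges_subdiv hGuw hGwv hkeep c e hec heuv⟩
        · right
          have hwp : w ∉ p.support := by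
            intro hmem
            have hwb := SubdivAux.w_eq_end_of_mem_support hiso p hmem
            rw [← hwb, hdegw] at hb3
            omega
          exact ⟨a, b, SubdivAux.subdivWalk hGuw hGwv hkeep p,
            SubdivAux.isPath_subdiv hGuw hGwv hkeep p hwp hp,
            SubdivAux.mem_edges_subdiv hGuw hGwv hkeep p e hep heuv,
            hdeg3 a ha3, hdeg3 b hb3⟩
  have himg : f '' {e | InternalEdge H e} ⊆ {e | InternalEdge G' e} := by
    rintro _ ⟨e, he, rfl⟩
    exact hmaps e he
  calc beta H = {e | InternalEdge H e}.ncard := rfl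
    _ = (f '' {e | InternalEdge H e}).ncard := (Set.ncard_image_of_injOn hinj).symm
    _ ≤ {e | InternalEdge G' e}.ncard := Set.ncard_le_ncard himg hGfin
    _ = beta G' := rfl
end Aux
end

section
/- If H is a graph whose every connected component is a subdivision of a star (equivalently, H has no internal edges, β(H)=0), then for every graph G, H is a topological minor of G if and only if H is a subgraph of G. -/
open SimpleGraph

namespace TopAux

variable {H : SimpleGraph ℕ}

lemma not_adj_iso {w x : ℕ} (hw : H.neighborSet w = ∅) : ¬ H.Adj w x := by
  intro h
  have : x ∈ H.neighborSet w := h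
  simp [hw] at this

lemma nbr_finite (hfin : H.edgeSet.Finite) (x : ℕ) : (H.neighborSet x).Finite := by
  have he : H.neighborSet x = (fun y => s(x, y)) ⁻¹' H.edgeSet := by
    ext y; simp [SimpleGraph.mem_edgeSet, SimpleGraph.mem_neighborSet]
  rw [he]
  exact hfin.preimage (fun a _ b _ hab => Sym2.congr_right.mp hab)

lemma path_length_le (hfin : H.edgeSet.Finite) {a b : ℕ} (p : H.Walk a b) (hp : p.IsPath) :
    p.length ≤ H.edgeSet.ncard := by
  classical
  have h1 : p.edges.toFinset.card = p.length := by
    rw [List.toFinset_card_of_nodup hp.isTrail.edges_nodup, p.length_edges]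
  have h2 : p.edges.toFinset ⊆ hfin.toFinset := by
    intro e he
    rw [List.mem_toFinset] at he
    exact hfin.mem_toFinset.mpr (p.edges_subset_edgeSet he)
  have h3 := Finset.card_le_card h2
  rw [h1] at h3
  rwa [Set.ncard_eq_toFinset_card H.edgeSet hfin]

lemma iso_not_mem_support {w a b : ℕ} (hw : H.neighborSet w = ∅) (hwa : w ≠ a)
    (p : H.Walk a b) : w ∉ p.support := by
  induction p with
  | nil => simp [hwa]
  | @cons a c b h q ih =>
    rw [SimpleGraph.Walk.support_cons]
    intro hm
    rcases List.mem_cons.mp hm with h1 | h2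
    · exact hwa h1
    · have hwc : w ≠ c := by
        rintro rfl
        exact not_adj_iso hw h.symm
      exact ih hwc h2

lemma acyclic_of_noInternal (h : ∀ e, ¬ InternalEdge H e) : H.IsAcyclic := by
  intro x c hc
  have hne : c.edges ≠ [] := by
    have : c.edges.length = c.length := c.length_edges
    have h3 := hc.three_le_length
    intro hnil
    rw [hnil] at this
    simp at this
    omega
  obtain ⟨e, he⟩ := List.exists_mem_of_ne_nil c.edges hne
  exact h e ⟨c.edges_subset_edgeSet he, Or.inl ⟨x, c, hc, he⟩⟩

lemma big_unique_of_noInternal (h : ∀ e, ¬ InternalEdge H e) :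
    ∀ a b, 3 ≤ degN H a → 3 ≤ degN H b → H.Reachable a b → a = b := by
  intro a b ha hb hr
  by_contra hab
  obtain ⟨p⟩ := hr
  set q := p.toPath with hq
  have hnn : ¬ (q : H.Walk a b).Nil := SimpleGraph.Walk.not_nil_of_ne hab
  have hne : (q : H.Walk a b).edges ≠ [] := by
    intro hnil
    apply hnn
    rw [SimpleGraph.Walk.nil_iff_length_eq, ← SimpleGraph.Walk.length_edges, hnil]
    rfl
  obtain ⟨e, he⟩ := List.exists_mem_of_ne_nil _ hne
  exact h e ⟨(q : H.Walk a b).edges_subset_edgeSet he,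
    Or.inr ⟨a, b, q, q.isPath, he, ha, hb⟩⟩

section Subdiv

variable {u v w : ℕ} (huv : H.Adj u v) (hw : H.neighborSet w = ∅) (hwu : w ≠ u) (hwv : w ≠ v)

/-- the subdivided graph -/
abbrev SD (H : SimpleGraph ℕ) (u v w : ℕ) : SimpleGraph ℕ :=
  SimpleGraph.fromEdgeSet ((H.edgeSet \ {s(u, v)}) ∪ {s(u, w), s(w, v)})

include huv hwu hwv in
lemma subdiv_adj {a b : ℕ} :
    (SD H u v w).Adj a b ↔
      ((H.Adj a b ∧ s(a, b) ≠ s(u, v)) ∨ s(a, b) = s(u, w) ∨ s(a, b) = s(w, v)) := by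
  rw [SimpleGraph.fromEdgeSet_adj]
  constructor
  · rintro ⟨hm, -⟩
    rcases hm with ⟨he, hne⟩ | hm
    · exact Or.inl ⟨he, by simpa using hne⟩
    · rcases hm with hm | hm
      · exact Or.inr (Or.inl hm)
      · exact Or.inr (Or.inr (by simpa using hm))
  · rintro (⟨he, hne⟩ | he | he)
    · exact ⟨Or.inl ⟨he, by simpa using hne⟩, he.ne⟩
    · refine ⟨Or.inr (by simp [he]), ?_⟩
      obtain ⟨h1, h2⟩ | ⟨h1, h2⟩ := Sym2.eq_iff.mp he
      · rw [h1, h2]; exact fun hh => hwu hh.symm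
      · rw [h1, h2]; exact hwu
    · refine ⟨Or.inr (by simp [he]), ?_⟩
      obtain ⟨h1, h2⟩ | ⟨h1, h2⟩ := Sym2.eq_iff.mp he
      · rw [h1, h2]; exact hwv
      · rw [h1, h2]; exact fun hh => hwv hh.symm

include huv hw hwu hwv in
lemma subdiv_not_adj_uv : ¬ (SD H u v w).Adj u v := by
  rw [subdiv_adj huv hwu hwv]
  push_neg
  refine ⟨fun _ => rfl, ?_, ?_⟩
  · intro he
    obtain ⟨-, h2⟩ | ⟨h1, -⟩ := Sym2.eq_iff.mp he
    · exact hwv h2.symm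
    · exact hwu h1.symm
  · intro he
    obtain ⟨h1, -⟩ | ⟨-, h2⟩ := Sym2.eq_iff.mp he
    · exact hwu h1.symm
    · exact hwv h2.symm

include huv hw hwu hwv in
lemma subdiv_nbr_w : (SD H u v w).neighborSet w = {u, v} := by
  ext y
  simp only [SimpleGraph.mem_neighborSet, subdiv_adj huv hwu hwv, Set.mem_insert_iff,
    Set.mem_singleton_iff]
  constructor
  · rintro (⟨ha, -⟩ | he | he)
    · exact absurd ha (not_adj_iso hw)
    · obtain ⟨h1, -⟩ | ⟨-, h2⟩ := Sym2.eq_iff.mp he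
      · exact absurd h1 hwu
      · exact Or.inl h2
    · obtain ⟨-, h2⟩ | ⟨h1, -⟩ := Sym2.eq_iff.mp he
      · exact Or.inr h2
      · exact absurd h1 hwv
  · rintro (rfl | rfl)
    · exact Or.inr (Or.inl Sym2.eq_swap)
    · exact Or.inr (Or.inr rfl)

include huv hw hwu hwv in
lemma subdiv_nbr_u : (SD H u v w).neighborSet u = insert w (H.neighborSet u \ {v}) := by
  ext y
  simp only [SimpleGraph.mem_neighborSet, subdiv_adj huv hwu hwv, Set.mem_insert_iff,
    Set.mem_diff, Set.mem_singleton_iff]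
  constructor
  · rintro (⟨ha, hne⟩ | he | he)
    · exact Or.inr ⟨ha, fun hy => hne (by rw [hy])⟩
    · obtain ⟨-, h2⟩ | ⟨h1, -⟩ := Sym2.eq_iff.mp he
      · exact Or.inl h2
      · exact absurd h1.symm hwu
    · obtain ⟨h1, -⟩ | ⟨h1, -⟩ := Sym2.eq_iff.mp he
      · exact absurd h1.symm hwu
      · exact absurd h1 huv.ne
  · rintro (rfl | ⟨ha, hne⟩)
    · exact Or.inr (Or.inl rfl)
    · exact Or.inl ⟨ha, fun he => hne (Sym2.congr_right.mp he)⟩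

include huv hw hwu hwv in
lemma subdiv_nbr_v : (SD H u v w).neighborSet v = insert w (H.neighborSet v \ {u}) := by
  ext y
  simp only [SimpleGraph.mem_neighborSet, subdiv_adj huv hwu hwv, Set.mem_insert_iff,
    Set.mem_diff, Set.mem_singleton_iff]
  constructor
  · rintro (⟨ha, hne⟩ | he | he)
    · refine Or.inr ⟨ha, fun hy => hne ?_⟩
      rw [hy, Sym2.eq_swap]
    · obtain ⟨h1, -⟩ | ⟨h1, -⟩ := Sym2.eq_iff.mp he
      · exact absurd h1 huv.ne'
      · exact absurd h1.symm hwv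
    · obtain ⟨h1, -⟩ | ⟨-, h2⟩ := Sym2.eq_iff.mp he
      · exact absurd h1.symm hwv
      · exact Or.inl h2
  · rintro (rfl | ⟨ha, hne⟩)
    · exact Or.inr (Or.inr Sym2.eq_swap)
    · refine Or.inl ⟨ha, fun he => ?_⟩
      obtain ⟨h1, -⟩ | ⟨-, h2⟩ := Sym2.eq_iff.mp he
      · exact huv.ne' h1
      · exact hne h2

include huv hw hwu hwv in
lemma subdiv_nbr_other {x : ℕ} (hxu : x ≠ u) (hxv : x ≠ v) (hxw : x ≠ w) :
    (SD H u v w).neighborSet x = H.neighborSet x := by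
  ext y
  simp only [SimpleGraph.mem_neighborSet, subdiv_adj huv hwu hwv]
  constructor
  · rintro (⟨ha, -⟩ | he | he)
    · exact ha
    · obtain ⟨h1, -⟩ | ⟨h1, -⟩ := Sym2.eq_iff.mp he
      · exact absurd h1 hxu
      · exact absurd h1 hxw
    · obtain ⟨h1, -⟩ | ⟨h1, -⟩ := Sym2.eq_iff.mp he
      · exact absurd h1 hxw
      · exact absurd h1 hxv
  · intro ha
    refine Or.inl ⟨ha, fun he => ?_⟩
    obtain ⟨h1, -⟩ | ⟨h1, -⟩ := Sym2.eq_iff.mp he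
    · exact hxu h1
    · exact hxv h1


include huv hw hwu hwv in
lemma subdiv_deg_w : degN (SD H u v w) w = 2 := by
  rw [degN, subdiv_nbr_w huv hw hwu hwv]
  exact Set.ncard_pair huv.ne

include huv hw hwu hwv in
lemma subdiv_deg_eq (hfin : H.edgeSet.Finite) {x : ℕ} (hxw : x ≠ w) :
    degN (SD H u v w) x = degN H x := by
  by_cases hxu : x = u
  · subst hxu
    rw [degN, degN, subdiv_nbr_u huv hw hwu hwv]
    have hSfin : (H.neighborSet x).Finite := nbr_finite hfin x
    have hv : v ∈ H.neighborSet x := huv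
    have hwn : w ∉ H.neighborSet x \ {v} := by
      rintro ⟨hmem, -⟩
      exact not_adj_iso hw ((SimpleGraph.mem_neighborSet H x w).mp hmem).symm
    rw [Set.ncard_insert_of_notMem hwn hSfin.diff,
      Set.ncard_diff_singleton_of_mem hv]
    have hpos : 0 < (H.neighborSet x).ncard := (Set.ncard_pos hSfin).mpr ⟨v, hv⟩
    omega
  · by_cases hxv : x = v
    · subst hxv
      rw [degN, degN, subdiv_nbr_v huv hw hwu hwv]
      have hSfin : (H.neighborSet x).Finite := nbr_finite hfin x
      have hv : u ∈ H.neighborSet x := huv.symm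
      have hwn : w ∉ H.neighborSet x \ {u} := by
        rintro ⟨hmem, -⟩
        exact not_adj_iso hw ((SimpleGraph.mem_neighborSet H x w).mp hmem).symm
      rw [Set.ncard_insert_of_notMem hwn hSfin.diff,
        Set.ncard_diff_singleton_of_mem hv]
      have hpos : 0 < (H.neighborSet x).ncard := (Set.ncard_pos hSfin).mpr ⟨u, hv⟩
      omega
    · rw [degN, degN, subdiv_nbr_other huv hw hwu hwv hxu hxv hxw]

include huv hw hwu hwv in
lemma subdiv_reach {a b : ℕ} (hr : (SD H u v w).Reachable a b) (ha : a ≠ w) (hb : b ≠ w) :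
    H.Reachable a b := by
  obtain ⟨p⟩ := hr
  have key : ∀ {x y : ℕ}, (SD H u v w).Walk x y →
      H.Reachable (if x = w then u else x) (if y = w then u else y) := by
    intro x y p
    induction p with
    | nil => exact Reachable.refl _
    | @cons x c y hadj q ih =>
      refine Reachable.trans ?_ ih
      rcases (subdiv_adj huv hwu hwv).mp hadj with ⟨ha', -⟩ | he | he
      · have hxw : x ≠ w := by rintro rfl; exact not_adj_iso hw ha'
        have hcw : c ≠ w := by rintro rfl; exact not_adj_iso hw ha'.symm
        rw [if_neg hxw, if_neg hcw]
        exact ha'.reachable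
      · obtain ⟨h1, h2⟩ | ⟨h1, h2⟩ := Sym2.eq_iff.mp he
        · rw [if_neg (h1 ▸ hwu.symm ∘ Eq.symm ∘ Eq.symm), h1, if_pos h2]
        · rw [if_pos h1, h2, if_neg (fun hh => hwu hh.symm)]
      · obtain ⟨h1, h2⟩ | ⟨h1, h2⟩ := Sym2.eq_iff.mp he
        · rw [if_pos h1, h2, if_neg (fun hh => hwv hh.symm)]
          exact huv.reachable
        · rw [h1, if_neg (fun hh => hwv hh.symm), if_pos h2]
          exact huv.reachable.symm
  have := key p
  rwa [if_neg ha, if_neg hb] at this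

include huv hw hwu hwv in
lemma subdiv_edges_in_H {x y : ℕ} (r : (SD H u v w).Walk x y) (hwr : w ∉ r.support) :
    ∀ e ∈ r.edges, e ∈ H.edgeSet := by
  intro e he
  induction e using Sym2.ind with
  | _ a b =>
    have heG : (SD H u v w).Adj a b := r.adj_of_mem_edges he
    rcases (subdiv_adj huv hwu hwv).mp heG with ⟨ha, -⟩ | hee | hee
    · exact ha
    · obtain ⟨h1, h2⟩ | ⟨h1, h2⟩ := Sym2.eq_iff.mp hee
      · exact absurd (h2 ▸ r.snd_mem_support_of_mem_edges he) hwr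
      · exact absurd (h1 ▸ r.fst_mem_support_of_mem_edges he) hwr
    · obtain ⟨h1, h2⟩ | ⟨h1, h2⟩ := Sym2.eq_iff.mp hee
      · exact absurd (h1 ▸ r.fst_mem_support_of_mem_edges he) hwr
      · exact absurd (h2 ▸ r.snd_mem_support_of_mem_edges he) hwr

include huv hw hwu hwv in
lemma subdiv_acyclic (hac : H.IsAcyclic) : (SD H u v w).IsAcyclic := by
  intro x c hc
  by_cases hws : w ∈ c.support
  · have hc' := hc.rotate hws
    obtain ⟨y, hwy, q, hq⟩ := SimpleGraph.Walk.not_nil_iff.mp hc'.not_nil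
    rw [hq, SimpleGraph.Walk.cons_isCycle_iff] at hc'
    obtain ⟨hqp, hqe⟩ := hc'
    obtain ⟨z, hwz, r, hrq⟩ :=
      SimpleGraph.Walk.not_nil_iff.mp (SimpleGraph.Walk.not_nil_of_ne hwy.ne (p := q.reverse))
    have hrevp : q.reverse.IsPath := hqp.reverse
    rw [hrq] at hrevp
    have hrp : r.IsPath := hrevp.of_cons
    have hwr : w ∉ r.support := by
      have := (SimpleGraph.Walk.cons_isPath_iff hwz r).mp hrevp
      exact this.2
    have hy : y ∈ ({u, v} : Set ℕ) := by
      rw [← subdiv_nbr_w huv hw hwu hwv]; exact hwy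
    have hz : z ∈ ({u, v} : Set ℕ) := by
      rw [← subdiv_nbr_w huv hw hwu hwv]; exact hwz
    have hyz : y ≠ z := by
      rintro rfl
      apply hqe
      have : s(w, y) ∈ q.reverse.edges := by rw [hrq]; exact List.mem_cons_self
      rwa [SimpleGraph.Walk.edges_reverse, List.mem_reverse] at this
    have hne : s(y, z) ∉ r.edges := by
      intro hmem
      have hadj : (SD H u v w).Adj y z := r.adj_of_mem_edges hmem
      rcases hy with rfl | rfl <;> rcases hz with rfl | rfl
      · exact hyz rfl
      · exact subdiv_not_adj_uv huv hw hwu hwv hadj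
      · exact subdiv_not_adj_uv huv hw hwu hwv hadj.symm
      · exact hyz rfl
    have hedges := subdiv_edges_in_H huv hw hwu hwv r hwr
    have hHadj : H.Adj y z := by
      rcases hy with rfl | rfl <;> rcases hz with rfl | rfl
      · exact absurd rfl hyz
      · exact huv
      · exact huv.symm
      · exact absurd rfl hyz
    refine hac (SimpleGraph.Walk.cons hHadj (r.transfer H hedges)) ?_
    rw [SimpleGraph.Walk.cons_isCycle_iff]
    refine ⟨hrp.transfer hedges, ?_⟩
    rwa [SimpleGraph.Walk.edges_transfer]
  · obtain ⟨y, hxy, q, hq⟩ := SimpleGraph.Walk.not_nil_iff.mp hc.not_nil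
    rw [hq, SimpleGraph.Walk.cons_isCycle_iff] at hc
    obtain ⟨hqp, hqe⟩ := hc
    have hwq : w ∉ q.support := by
      intro hmem
      apply hws
      rw [hq, SimpleGraph.Walk.support_cons]
      exact List.mem_cons_of_mem _ hmem
    have hxs : x ∈ c.support := c.start_mem_support
    have hH : H.Adj x y := by
      rcases (subdiv_adj huv hwu hwv).mp hxy with ⟨ha, -⟩ | hee | hee
      · exact ha
      · obtain ⟨h1, h2⟩ | ⟨h1, h2⟩ := Sym2.eq_iff.mp hee
        · subst h2
          refine absurd ?_ hws
          rw [hq, SimpleGraph.Walk.support_cons]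
          exact List.mem_cons_of_mem _ q.start_mem_support
        · subst h1
          exact absurd hxs hws
      · obtain ⟨h1, h2⟩ | ⟨h1, h2⟩ := Sym2.eq_iff.mp hee
        · subst h1
          exact absurd hxs hws
        · subst h2
          refine absurd ?_ hws
          rw [hq, SimpleGraph.Walk.support_cons]
          exact List.mem_cons_of_mem _ q.start_mem_support
    have hedges := subdiv_edges_in_H huv hw hwu hwv q hwq
    refine hac (SimpleGraph.Walk.cons hH (q.transfer H hedges)) ?_
    rw [SimpleGraph.Walk.cons_isCycle_iff]
    refine ⟨hqp.transfer hedges, ?_⟩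
    rwa [SimpleGraph.Walk.edges_transfer]

end Subdiv

lemma subgraph_trans {A B C : SimpleGraph ℕ} (h1 : SubgraphOf A B) (h2 : SubgraphOf B C) :
    SubgraphOf A C := by
  obtain ⟨f, hf⟩ := h1
  obtain ⟨g, hg⟩ := h2
  exact ⟨g.comp f, hg.comp hf⟩

lemma u_not_in (hac : H.IsAcyclic) {u v s' : ℕ} (huv : H.Adj u v) (hvs : H.Adj v s')
    (hsu : s' ≠ u) {x : ℕ} (q : H.Walk s' x) (hq : q.IsPath) (hv : v ∉ q.support) :
    u ∉ q.support := by
  intro hu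
  have hq' : (q.takeUntil u hu).IsPath := hq.takeUntil hu
  have hv' : v ∉ (q.takeUntil u hu).support :=
    fun hm => hv (SimpleGraph.Walk.support_takeUntil_subset q hu hm)
  refine hac (SimpleGraph.Walk.cons huv (SimpleGraph.Walk.cons hvs (q.takeUntil u hu))) ?_
  rw [SimpleGraph.Walk.cons_isCycle_iff]
  constructor
  · rw [SimpleGraph.Walk.cons_isPath_iff]
    exact ⟨hq', hv'⟩
  · rw [SimpleGraph.Walk.edges_cons]
    intro hmem
    rcases List.mem_cons.mp hmem with he | he
    · obtain ⟨h1, -⟩ | ⟨h1, -⟩ := Sym2.eq_iff.mp he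
      · exact huv.ne h1
      · exact hsu h1.symm
    · exact hv' ((q.takeUntil u hu).snd_mem_support_of_mem_edges he)

section Subdiv2

variable {u v w : ℕ} (huv : H.Adj u v) (hw : H.neighborSet w = ∅) (hwu : w ≠ u) (hwv : w ≠ v)

include huv hw hwu hwv in
lemma embed_deg1 (hnbr : H.neighborSet v = {u}) : SubgraphOf H (SD H u v w) := by
  refine ⟨⟨⇑(Equiv.swap v w), ?_⟩, (Equiv.swap v w).injective⟩
  intro a b hab
  have haw : a ≠ w := by rintro rfl; exact not_adj_iso hw hab
  have hbw : b ≠ w := by rintro rfl; exact not_adj_iso hw hab.symm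
  rcases eq_or_ne a v with rfl | hav
  · have hbu : b = u := by
      have : b ∈ H.neighborSet a := hab
      rwa [hnbr, Set.mem_singleton_iff] at this
    subst hbu
    rw [Equiv.swap_apply_left, Equiv.swap_apply_of_ne_of_ne hab.ne' hwu.symm]
    exact (subdiv_adj huv hwu hwv).mpr (Or.inr (Or.inl Sym2.eq_swap))
  · rcases eq_or_ne b v with rfl | hbv
    · have hau : a = u := by
        have : a ∈ H.neighborSet b := hab.symm
        rwa [hnbr, Set.mem_singleton_iff] at this
      subst hau
      rw [Equiv.swap_apply_left, Equiv.swap_apply_of_ne_of_ne hab.ne hwu.symm]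
      exact (subdiv_adj huv hwu hwv).mpr (Or.inr (Or.inl rfl))
    · rw [Equiv.swap_apply_of_ne_of_ne hav haw, Equiv.swap_apply_of_ne_of_ne hbv hbw]
      refine (subdiv_adj huv hwu hwv).mpr (Or.inl ⟨hab, fun he => ?_⟩)
      obtain ⟨-, h2⟩ | ⟨h1, -⟩ := Sym2.eq_iff.mp he
      · exact hbv h2
      · exact hav h1

include huv hw hwu hwv in
lemma swap_hom_deg2 {s' : ℕ} (hvs : H.Adj v s') (hsu : s' ≠ u)
    (hnbr : H.neighborSet v = {u, s'}) (hws : w ≠ s') {a b : ℕ}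
    (hab : (SD H v s' w).Adj a b) :
    (SD H u v w).Adj (Equiv.swap v w a) (Equiv.swap v w b) := by
  have hsw : s' ≠ w := fun hh => hws hh.symm
  have hsv : s' ≠ v := hvs.ne'
  rcases (subdiv_adj hvs hwv hws).mp hab with ⟨hH, hne⟩ | he | he
  · have haw : a ≠ w := by rintro rfl; exact not_adj_iso hw hH
    have hbw : b ≠ w := by rintro rfl; exact not_adj_iso hw hH.symm
    rcases eq_or_ne a v with rfl | hav
    · have hbu : b = u := by
        have hmem : b ∈ H.neighborSet a := hH
        rw [hnbr] at hmem
        rcases hmem with rfl | rfl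
        · rfl
        · exact absurd rfl hne
      subst hbu
      rw [Equiv.swap_apply_left, Equiv.swap_apply_of_ne_of_ne hH.ne' hwu.symm]
      exact (subdiv_adj huv hwu hwv).mpr (Or.inr (Or.inl Sym2.eq_swap))
    · rcases eq_or_ne b v with rfl | hbv
      · have hau : a = u := by
          have hmem : a ∈ H.neighborSet b := hH.symm
          rw [hnbr] at hmem
          rcases hmem with rfl | rfl
          · rfl
          · exact absurd Sym2.eq_swap hne
        subst hau
        rw [Equiv.swap_apply_left, Equiv.swap_apply_of_ne_of_ne hH.ne hwu.symm]
        exact (subdiv_adj huv hwu hwv).mpr (Or.inr (Or.inl rfl))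
      · rw [Equiv.swap_apply_of_ne_of_ne hav haw, Equiv.swap_apply_of_ne_of_ne hbv hbw]
        refine (subdiv_adj huv hwu hwv).mpr (Or.inl ⟨hH, fun hee => ?_⟩)
        obtain ⟨-, h2⟩ | ⟨h1, -⟩ := Sym2.eq_iff.mp hee
        · exact hbv h2
        · exact hav h1
  · obtain ⟨h1, h2⟩ | ⟨h1, h2⟩ := Sym2.eq_iff.mp he
    · subst h1; subst h2
      rw [Equiv.swap_apply_left, Equiv.swap_apply_right]
      exact (subdiv_adj huv hwu hwv).mpr (Or.inr (Or.inr rfl))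
    · subst h1; subst h2
      rw [Equiv.swap_apply_left, Equiv.swap_apply_right]
      exact (subdiv_adj huv hwu hwv).mpr (Or.inr (Or.inr Sym2.eq_swap))
  · obtain ⟨h1, h2⟩ | ⟨h1, h2⟩ := Sym2.eq_iff.mp he
    · subst h1; subst h2
      rw [Equiv.swap_apply_right, Equiv.swap_apply_of_ne_of_ne hsv hsw]
      refine (subdiv_adj huv hwu hwv).mpr (Or.inl ⟨hvs, fun hee => ?_⟩)
      obtain ⟨h1, -⟩ | ⟨-, h2⟩ := Sym2.eq_iff.mp hee
      · exact huv.ne h1.symm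
      · exact hsu h2
    · subst h1; subst h2
      rw [Equiv.swap_apply_right, Equiv.swap_apply_of_ne_of_ne hsv hsw]
      refine (subdiv_adj huv hwu hwv).mpr (Or.inl ⟨hvs.symm, fun hee => ?_⟩)
      obtain ⟨h1, -⟩ | ⟨-, h2⟩ := Sym2.eq_iff.mp hee
      · exact hsu h1
      · exact huv.ne' h2

end Subdiv2

lemma embed (hfin : H.edgeSet.Finite) (hac : H.IsAcyclic) :
    ∀ (N u v w : ℕ), H.Adj u v → H.neighborSet w = ∅ → w ≠ u → w ≠ v →
      (∀ (x : ℕ) (p : H.Walk v x), p.IsPath → u ∉ p.support → p.length ≤ N) →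
      (∀ (x : ℕ) (p : H.Walk v x), p.IsPath → u ∉ p.support → degN H x ≤ 2) →
      SubgraphOf H (SD H u v w) := by
  have deg_cases : ∀ u v : ℕ, H.Adj u v →
      (∀ (x : ℕ) (p : H.Walk v x), p.IsPath → u ∉ p.support → degN H x ≤ 2) →
      H.neighborSet v = {u} ∨
        ∃ s', s' ≠ u ∧ H.Adj v s' ∧ H.neighborSet v = {u, s'} := by
    intro u v huv hclean
    have hfin' : (H.neighborSet v).Finite := nbr_finite hfin v
    have hu : u ∈ H.neighborSet v := huv.symm
    have hd2 : degN H v ≤ 2 := by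
      refine hclean v SimpleGraph.Walk.nil SimpleGraph.Walk.IsPath.nil ?_
      rw [SimpleGraph.Walk.support_nil, List.mem_singleton]
      exact huv.ne
    have hd1 : 1 ≤ degN H v := (Set.ncard_pos hfin').mpr ⟨u, hu⟩
    interval_cases hdeg : degN H v
    · obtain ⟨a, ha⟩ := Set.ncard_eq_one.mp hdeg
      rw [ha, Set.mem_singleton_iff] at hu
      subst hu
      exact Or.inl ha
    · obtain ⟨a, b, hab, hS⟩ := Set.ncard_eq_two.mp hdeg
      rw [hS] at hu
      rcases hu with rfl | rfl
      · refine Or.inr ⟨b, fun hh => hab hh.symm, ?_, hS⟩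
        have : b ∈ H.neighborSet v := by rw [hS]; exact Or.inr rfl
        exact this
      · refine Or.inr ⟨a, hab, ?_, ?_⟩
        · have : a ∈ H.neighborSet v := by rw [hS]; exact Or.inl rfl
          exact this
        · rw [hS, Set.pair_comm]
  intro N
  induction N with
  | zero =>
    intro u v w huv hw hwu hwv hbound hclean
    rcases deg_cases u v huv hclean with hnbr | ⟨s', hsu, hvs, hnbr⟩
    · exact embed_deg1 huv hw hwu hwv hnbr
    · exfalso
      have hp : (SimpleGraph.Walk.cons hvs SimpleGraph.Walk.nil).IsPath := by
        rw [SimpleGraph.Walk.cons_isPath_iff]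
        refine ⟨SimpleGraph.Walk.IsPath.nil, ?_⟩
        rw [SimpleGraph.Walk.support_nil, List.mem_singleton]
        exact hvs.ne
      have hu : u ∉ (SimpleGraph.Walk.cons hvs SimpleGraph.Walk.nil).support := by
        rw [SimpleGraph.Walk.support_cons, SimpleGraph.Walk.support_nil]
        intro hm
        rcases List.mem_cons.mp hm with h1 | h2
        · exact huv.ne h1
        · rw [List.mem_singleton] at h2
          exact hsu h2.symm
      have := hbound s' _ hp hu
      simp at this
  | succ n ih =>
    intro u v w huv hw hwu hwv hbound hclean
    rcases deg_cases u v huv hclean with hnbr | ⟨s', hsu, hvs, hnbr⟩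
    · exact embed_deg1 huv hw hwu hwv hnbr
    · have hws : w ≠ s' := by
        rintro rfl
        exact not_adj_iso hw hvs.symm
      have hsub : SubgraphOf H (SD H v s' w) := by
        refine ih v s' w hvs hw hwv hws ?_ ?_
        · intro x q hq hvq
          have huq : u ∉ q.support := u_not_in hac huv hvs hsu q hq hvq
          have hcp : (SimpleGraph.Walk.cons hvs q).IsPath := by
            rw [SimpleGraph.Walk.cons_isPath_iff]
            exact ⟨hq, hvq⟩
          have hcu : u ∉ (SimpleGraph.Walk.cons hvs q).support := by
            rw [SimpleGraph.Walk.support_cons]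
            intro hm
            rcases List.mem_cons.mp hm with h1 | h2
            · exact huv.ne h1
            · exact huq h2
          have := hbound x _ hcp hcu
          rw [SimpleGraph.Walk.length_cons] at this
          omega
        · intro x q hq hvq
          have huq : u ∉ q.support := u_not_in hac huv hvs hsu q hq hvq
          have hcp : (SimpleGraph.Walk.cons hvs q).IsPath := by
            rw [SimpleGraph.Walk.cons_isPath_iff]
            exact ⟨hq, hvq⟩
          have hcu : u ∉ (SimpleGraph.Walk.cons hvs q).support := by
            rw [SimpleGraph.Walk.support_cons]
            intro hm
            rcases List.mem_cons.mp hm with h1 | h2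
            · exact huv.ne h1
            · exact huq h2
          exact hclean x _ hcp hcu
      obtain ⟨f, hf⟩ := hsub
      refine ⟨SimpleGraph.Hom.comp ⟨⇑(Equiv.swap v w), ?_⟩ f, ?_⟩
      · intro a b hab
        exact swap_hom_deg2 huv hw hwu hwv hvs hsu hnbr hws hab
      · exact ((Equiv.swap v w).injective).comp hf

lemma clean_side (hac : H.IsAcyclic)
    (hbig : ∀ a b, 3 ≤ degN H a → 3 ≤ degN H b → H.Reachable a b → a = b)
    {u v : ℕ} (huv : H.Adj u v) :
    (∀ (x : ℕ) (p : H.Walk v x), p.IsPath → u ∉ p.support → degN H x ≤ 2) ∨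
    (∀ (x : ℕ) (p : H.Walk u x), p.IsPath → v ∉ p.support → degN H x ≤ 2) := by
  by_contra hcon
  push_neg at hcon
  obtain ⟨⟨x, p, hp, hup, hxbig⟩, ⟨y, q, hq, hvq, hybig⟩⟩ := hcon
  have hxy : x = y := by
    refine hbig x y hxbig hybig ?_
    have h1 : H.Reachable x v := ⟨p.reverse⟩
    have h2 : H.Reachable v u := huv.symm.reachable
    have h3 : H.Reachable u y := ⟨q⟩
    exact (h1.trans h2).trans h3
  subst hxy
  have hq1 : (SimpleGraph.Walk.cons huv p).IsPath := by
    rw [SimpleGraph.Walk.cons_isPath_iff]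
    exact ⟨hp, hup⟩
  have hpq := SimpleGraph.isAcyclic_iff_path_unique.mp hac
    ⟨SimpleGraph.Walk.cons huv p, hq1⟩ ⟨q, hq⟩
  have hval : SimpleGraph.Walk.cons huv p = q := congrArg Subtype.val hpq
  apply hvq
  rw [← hval, SimpleGraph.Walk.support_cons]
  exact List.mem_cons_of_mem _ p.start_mem_support

lemma step {X G : SimpleGraph ℕ} (hfin : X.edgeSet.Finite) (hac : X.IsAcyclic)
    (hbig : ∀ a b, 3 ≤ degN X a → 3 ≤ degN X b → X.Reachable a b → a = b)
    (hel : ElemSubdiv X G) :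
    G.edgeSet.Finite ∧ G.IsAcyclic ∧
      (∀ a b, 3 ≤ degN G a → 3 ≤ degN G b → G.Reachable a b → a = b) ∧
      SubgraphOf X G := by
  obtain ⟨u, v, w, huv, hw, hwu, hwv, rfl⟩ := hel
  refine ⟨?_, subdiv_acyclic huv hw hwu hwv hac, ?_, ?_⟩
  · refine Set.Finite.subset ((hfin.union ((Set.finite_singleton s(u, w)).insert s(u, w))).union
      ((Set.finite_singleton s(w, v)).insert s(u, w))) ?_
    rw [SimpleGraph.edgeSet_fromEdgeSet]
    intro e he
    obtain ⟨hm, -⟩ := he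
    rcases hm with ⟨h1, -⟩ | hm
    · exact Or.inl (Or.inl h1)
    · rcases hm with h1 | h1
      · exact Or.inl (Or.inr (Or.inl h1))
      · exact Or.inr (Or.inr h1)
  · intro a b ha hb hr
    have haw : a ≠ w := by
      rintro rfl
      rw [subdiv_deg_w huv hw hwu hwv] at ha
      omega
    have hbw : b ≠ w := by
      rintro rfl
      rw [subdiv_deg_w huv hw hwu hwv] at hb
      omega
    rw [subdiv_deg_eq huv hw hwu hwv hfin haw] at ha
    rw [subdiv_deg_eq huv hw hwu hwv hfin hbw] at hb
    exact hbig a b ha hb (subdiv_reach huv hw hwu hwv hr haw hbw)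
  · rcases clean_side hac hbig huv with hcl | hcl
    · exact embed hfin hac X.edgeSet.ncard u v w huv hw hwu hwv
        (fun x p hp _ => path_length_le hfin p hp) hcl
    · have hres := embed hfin hac X.edgeSet.ncard v u w huv.symm hw hwv hwu
        (fun x p hp _ => path_length_le hfin p hp) hcl
      have hEq : SD X v u w = SD X u v w := by
        have h1 : (s(v, u) : Sym2 ℕ) = s(u, v) := Sym2.eq_swap
        have h2 : ({s(v, w), s(w, u)} : Set (Sym2 ℕ)) = {s(u, w), s(w, v)} := by
          rw [show (s(v, w) : Sym2 ℕ) = s(w, v) from Sym2.eq_swap,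
            show (s(w, u) : Sym2 ℕ) = s(u, w) from Sym2.eq_swap, Set.pair_comm]
        rw [SD, SD, h1, h2]
      rwa [hEq] at hres

lemma accumulate {X : SimpleGraph ℕ} (hfin : H.edgeSet.Finite)
    (h : ∀ e : Sym2 ℕ, ¬ InternalEdge H e)
    (hX : Relation.ReflTransGen ElemSubdiv H X) :
    X.edgeSet.Finite ∧ X.IsAcyclic ∧
      (∀ a b, 3 ≤ degN X a → 3 ≤ degN X b → X.Reachable a b → a = b) ∧
      SubgraphOf H X := by
  induction hX with
  | refl =>
    exact ⟨hfin, acyclic_of_noInternal h, big_unique_of_noInternal h,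
      ⟨SimpleGraph.Hom.id, fun _ _ hh => hh⟩⟩
  | tail hab hbc ih =>
    obtain ⟨h1, h2, h3, h4⟩ := ih
    obtain ⟨g1, g2, g3, g4⟩ := step h1 h2 h3 hbc
    exact ⟨g1, g2, g3, subgraph_trans h4 g4⟩

end TopAux

/-- If the finite graph `H` has no internal edges (`β(H) = 0`, i.e., every
component of `H` is a subdivided star), then for every graph `G`, `H` is a
topological minor of `G` if and only if `H` is a subgraph of `G`. -/


theorem topMinor_iff_subgraph_of_no_internal (H : SimpleGraph ℕ)
    (hfin : H.edgeSet.Finite) (h : ∀ e : Sym2 ℕ, ¬ InternalEdge H e) :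
    ∀ G : SimpleGraph ℕ, TopMinorOf H G ↔ SubgraphOf H G := by
  intro G
  constructor
  · rintro ⟨H', hsub, hemb⟩
    exact TopAux.subgraph_trans (TopAux.accumulate hfin h hsub).2.2.2 hemb
  · intro hs
    exact ⟨H, Relation.ReflTransGen.refl, hs⟩
end

section
/- If H is a forest in which some connected component contains two distinct vertices of degree at least 3, then there exists a subdivision G of H that does not contain H as a subgraph. -/
open SimpleGraph

namespace SubProof

/-- the subdivided graph -/
def SD (G : SimpleGraph ℕ) (u v w : ℕ) : SimpleGraph ℕ :=
  SimpleGraph.fromEdgeSet ((G.edgeSet \ {s(u, v)}) ∪ {s(u, w), s(w, v)})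

section Step

variable {G : SimpleGraph ℕ} {u v w : ℕ}
  (huv : G.Adj u v) (hw : G.neighborSet w = ∅) (hwu : w ≠ u) (hwv : w ≠ v)

include hw in
lemma not_adj_w (x : ℕ) : ¬ G.Adj x w := fun h => by
  have : x ∈ G.neighborSet w := h.symm
  rw [hw] at this; exact this

include hw in
lemma not_adj_w' (x : ℕ) : ¬ G.Adj w x := fun h => (not_adj_w hw x) h.symm

include huv hw hwu hwv

lemma adj'_iff {x y : ℕ} :
    (SD G u v w).Adj x y ↔
      (G.Adj x y ∧ s(x, y) ≠ s(u, v)) ∨ s(x, y) = s(u, w) ∨ s(x, y) = s(w, v) := by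
  have hne1 : ∀ {x y : ℕ}, s(x, y) = s(u, w) → x ≠ y := by
    intro x y h rfl
    rw [Sym2.eq_iff] at h
    rcases h with ⟨rfl, rfl⟩ | ⟨rfl, rfl⟩ <;> simp_all
  have hne2 : ∀ {x y : ℕ}, s(x, y) = s(w, v) → x ≠ y := by
    intro x y h rfl
    rw [Sym2.eq_iff] at h
    rcases h with ⟨rfl, rfl⟩ | ⟨rfl, rfl⟩ <;> simp_all
  unfold SD
  rw [fromEdgeSet_adj]
  constructor
  · rintro ⟨hm, _⟩
    rcases hm with ⟨he, hne⟩ | (h | h)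
    · exact Or.inl ⟨he, hne⟩
    · exact Or.inr (Or.inl h)
    · exact Or.inr (Or.inr h)
  · rintro (⟨he, hne⟩ | h | h)
    · exact ⟨Or.inl ⟨he, hne⟩, he.ne⟩
    · exact ⟨Or.inr (Or.inl h), hne1 h⟩
    · exact ⟨Or.inr (Or.inr h), hne2 h⟩

lemma adj'_w_iff {x : ℕ} : (SD G u v w).Adj w x ↔ x = u ∨ x = v := by
  rw [adj'_iff huv hw hwu hwv]
  constructor
  · rintro (⟨ha, -⟩ | h | h)
    · exact absurd ha (not_adj_w' hw x)
    · rw [Sym2.eq_iff] at h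
      rcases h with ⟨h1, h2⟩ | ⟨h1, h2⟩
      · exact absurd h1 hwu
      · exact Or.inl h2
    · rw [Sym2.eq_iff] at h
      rcases h with ⟨h1, h2⟩ | ⟨h1, h2⟩
      · exact Or.inr h2
      · exact absurd h1 hwv
  · rintro (rfl | rfl)
    · exact Or.inr (Or.inl Sym2.eq_swap)
    · exact Or.inr (Or.inr rfl)

lemma adj'_of_ne {x y : ℕ} (hx : x ≠ w) (hy : y ≠ w) :
    (SD G u v w).Adj x y ↔ G.Adj x y ∧ s(x, y) ≠ s(u, v) := by
  rw [adj'_iff huv hw hwu hwv]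
  constructor
  · rintro (h | h | h)
    · exact h
    · rw [Sym2.eq_iff] at h
      rcases h with ⟨h1, h2⟩ | ⟨h1, h2⟩
      · exact absurd h2 hy
      · exact absurd h1 hx
    · rw [Sym2.eq_iff] at h
      rcases h with ⟨h1, h2⟩ | ⟨h1, h2⟩
      · exact absurd h1 hx
      · exact absurd h2 hy
  · exact fun h => Or.inl h

lemma nbhd_w : (SD G u v w).neighborSet w = {u, v} := by
  ext x
  simp only [mem_neighborSet, Set.mem_insert_iff, Set.mem_singleton_iff]
  exact adj'_w_iff huv hw hwu hwv

lemma nbhd_u : (SD G u v w).neighborSet u = insert w (G.neighborSet u \ {v}) := by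
  have huw : u ≠ w := fun h => hwu h.symm
  ext x
  simp only [mem_neighborSet, Set.mem_insert_iff, Set.mem_diff, Set.mem_singleton_iff]
  constructor
  · intro h
    rw [adj'_iff huv hw hwu hwv] at h
    rcases h with ⟨ha, hne⟩ | h | h
    · exact Or.inr ⟨ha, fun h2 => hne (by rw [h2])⟩
    · rw [Sym2.eq_iff] at h
      rcases h with ⟨-, h2⟩ | ⟨h1, h2⟩
      · exact Or.inl h2
      · exact absurd h1.symm hwu
    · rw [Sym2.eq_iff] at h
      rcases h with ⟨h1, h2⟩ | ⟨h1, h2⟩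
      · exact absurd h1.symm hwu
      · exact absurd h1 (G.ne_of_adj huv)
  · rintro (rfl | ⟨ha, hne⟩)
    · rw [adj'_iff huv hw hwu hwv]
      exact Or.inr (Or.inl rfl)
    · rw [adj'_of_ne huv hw hwu hwv huw (fun hh => not_adj_w hw u (hh ▸ ha))]
      refine ⟨ha, fun hc => ?_⟩
      rw [Sym2.eq_iff] at hc
      rcases hc with ⟨-, h2⟩ | ⟨h1, h2⟩
      · exact hne h2
      · exact absurd h1 (G.ne_of_adj huv)

lemma nbhd_v : (SD G u v w).neighborSet v = insert w (G.neighborSet v \ {u}) := by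
  have hvw : v ≠ w := fun h => hwv h.symm
  ext x
  simp only [mem_neighborSet, Set.mem_insert_iff, Set.mem_diff, Set.mem_singleton_iff]
  constructor
  · intro h
    rw [adj'_iff huv hw hwu hwv] at h
    rcases h with ⟨ha, hne⟩ | h | h
    · refine Or.inr ⟨ha, fun h2 => hne ?_⟩
      rw [h2]
      exact Sym2.eq_swap
    · rw [Sym2.eq_iff] at h
      rcases h with ⟨h1, h2⟩ | ⟨h1, h2⟩
      · exact absurd h1 (G.ne_of_adj huv.symm)
      · exact absurd h1.symm hwv
    · rw [Sym2.eq_iff] at h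
      rcases h with ⟨h1, h2⟩ | ⟨-, h2⟩
      · exact absurd h1.symm hwv
      · exact Or.inl h2
  · rintro (rfl | ⟨ha, hne⟩)
    · rw [adj'_iff huv hw hwu hwv]
      exact Or.inr (Or.inr Sym2.eq_swap)
    · rw [adj'_of_ne huv hw hwu hwv hvw (fun hh => not_adj_w hw v (hh ▸ ha))]
      refine ⟨ha, fun hc => ?_⟩
      rw [Sym2.eq_iff] at hc
      rcases hc with ⟨h1, -⟩ | ⟨-, h2⟩
      · exact G.ne_of_adj huv h1.symm
      · exact hne h2

lemma nbhd_other {x : ℕ} (hxu : x ≠ u) (hxv : x ≠ v) (hxw : x ≠ w) :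
    (SD G u v w).neighborSet x = G.neighborSet x := by
  ext y
  simp only [mem_neighborSet]
  rw [adj'_iff huv hw hwu hwv]
  constructor
  · rintro (⟨ha, -⟩ | h | h)
    · exact ha
    · rw [Sym2.eq_iff] at h
      rcases h with ⟨h1, h2⟩ | ⟨h1, h2⟩
      · exact absurd h1 hxu
      · exact absurd h1 hxw
    · rw [Sym2.eq_iff] at h
      rcases h with ⟨h1, h2⟩ | ⟨h1, h2⟩
      · exact absurd h1 hxw
      · exact absurd h1 hxv
  · intro ha
    refine Or.inl ⟨ha, fun hc => ?_⟩
    rw [Sym2.eq_iff] at hc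
    rcases hc with ⟨h1, -⟩ | ⟨h1, -⟩
    · exact hxu h1
    · exact hxv h1


omit huv hw hwu hwv in
lemma nbr_finite (hfin : G.edgeSet.Finite) (x : ℕ) : (G.neighborSet x).Finite := by
  apply Set.Finite.of_finite_image (f := fun y => s(x, y))
  · apply hfin.subset
    rintro e ⟨y, hy, rfl⟩
    exact hy
  · exact fun y1 _ y2 _ h => Sym2.congr_right.mp h

lemma degN_SD_w : degN (SD G u v w) w = 2 := by
  unfold degN
  rw [nbhd_w huv hw hwu hwv]
  exact Set.ncard_pair huv.ne

lemma degN_SD (hfin : G.edgeSet.Finite) {x : ℕ} (hx : x ≠ w) :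
    degN (SD G u v w) x = degN G x := by
  unfold degN
  by_cases hxu : x = u
  · subst hxu
    rw [nbhd_u huv hw hwu hwv]
    have hwn : w ∉ G.neighborSet x \ {v} := fun h => not_adj_w hw x h.1
    rw [Set.ncard_insert_of_notMem hwn (((nbr_finite hfin x).diff))]
    exact Set.ncard_diff_singleton_add_one ((G.mem_neighborSet x v).mpr huv)
      (nbr_finite hfin x)
  by_cases hxv : x = v
  · subst hxv
    rw [nbhd_v huv hw hwu hwv]
    have hwn : w ∉ G.neighborSet x \ {u} := fun h => not_adj_w hw x h.1
    rw [Set.ncard_insert_of_notMem hwn (((nbr_finite hfin x).diff))]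
    exact Set.ncard_diff_singleton_add_one ((G.mem_neighborSet x u).mpr huv.symm)
      (nbr_finite hfin x)
  rw [nbhd_other huv hw hwu hwv hxu hxv hx]

omit huv hw hwu hwv in
lemma edgeSet_SD_finite (hfin : G.edgeSet.Finite) : (SD G u v w).edgeSet.Finite := by
  unfold SD
  rw [edgeSet_fromEdgeSet]
  apply Set.Finite.subset (s := (G.edgeSet \ {s(u, v)}) ∪ {s(u, w), s(w, v)})
  · exact hfin.diff.union ((Set.finite_singleton _).insert _)
  · exact Set.diff_subset

lemma not_adj_SD_uv : ¬ (SD G u v w).Adj u v := by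
  rw [adj'_iff huv hw hwu hwv]
  rintro (⟨-, hne⟩ | h | h)
  · exact hne rfl
  · rw [Sym2.eq_iff] at h
    rcases h with ⟨-, h2⟩ | ⟨h1, -⟩
    · exact hwv h2.symm
    · exact hwu h1.symm
  · rw [Sym2.eq_iff] at h
    rcases h with ⟨h1, -⟩ | ⟨-, h2⟩
    · exact hwu h1.symm
    · exact hwv h2.symm

lemma suv_not_mem_SD : s(u, v) ∉ (SD G u v w).edgeSet := fun h =>
  not_adj_SD_uv huv hw hwu hwv ((SimpleGraph.mem_edgeSet _).mp h)

lemma edge_SD_of_not_w {e : Sym2 ℕ} (he : e ∈ (SD G u v w).edgeSet) (hwe : w ∉ e) :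
    e ∈ G.edgeSet ∧ e ≠ s(u, v) := by
  induction e with
  | _ x y =>
    rw [mem_edgeSet, adj'_iff huv hw hwu hwv] at he
    rw [Sym2.mem_iff] at hwe
    push_neg at hwe
    rcases he with ⟨ha, hne⟩ | h | h
    · exact ⟨ha, hne⟩
    · rw [Sym2.eq_iff] at h
      rcases h with ⟨-, h2⟩ | ⟨h1, -⟩
      · exact absurd h2.symm hwe.2
      · exact absurd h1.symm hwe.1
    · rw [Sym2.eq_iff] at h
      rcases h with ⟨h1, -⟩ | ⟨-, h2⟩
      · exact absurd h1.symm hwe.1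
      · exact absurd h2.symm hwe.2

lemma elemSubdiv_SD : ElemSubdiv G (SD G u v w) :=
  ⟨u, v, w, huv, hw, hwu, hwv, rfl⟩

lemma adj_SD_uw : (SD G u v w).Adj u w :=
  (adj'_iff huv hw hwu hwv).mpr (Or.inr (Or.inl rfl))

lemma adj_SD_wv : (SD G u v w).Adj w v :=
  (adj'_iff huv hw hwu hwv).mpr (Or.inr (Or.inr rfl))

lemma reachable_SD {x y : ℕ} (h : G.Reachable x y) : (SD G u v w).Reachable x y := by
  obtain ⟨p⟩ := h
  induction p with
  | nil => exact Reachable.refl _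
  | @cons a c d h' p' ih =>
    refine Reachable.trans ?_ ih
    by_cases he : s(a, c) = s(u, v)
    · rw [Sym2.eq_iff] at he
      rcases he with ⟨rfl, rfl⟩ | ⟨rfl, rfl⟩
      · exact ((adj_SD_uw huv hw hwu hwv).reachable).trans (adj_SD_wv huv hw hwu hwv).reachable
      · exact ((adj_SD_wv huv hw hwu hwv).symm.reachable).trans
          (adj_SD_uw huv hw hwu hwv).symm.reachable
    · have haw : a ≠ w := by rintro rfl; exact not_adj_w' hw c h'
      have hcw : c ≠ w := by rintro rfl; exact not_adj_w hw a h'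
      exact ((adj'_of_ne huv hw hwu hwv haw hcw).mpr ⟨h', he⟩).reachable

lemma walk_down (k : ℕ) :
    ∀ {x y : ℕ} (p : (SD G u v w).Walk x y), p.length ≤ k → x ≠ w → y ≠ w →
      ∃ q : G.Walk x y, q.length ≤ p.length ∧ (w ∈ p.support → q.length < p.length) := by
  induction k with
  | zero =>
    intro x y p hl hx hy
    cases p with
    | nil =>
      refine ⟨Walk.nil, le_refl 0, fun hmem => ?_⟩
      simp only [Walk.support_nil, List.mem_singleton] at hmem
      exact absurd hmem.symm hx
    | cons h' p' => simp [Walk.length_cons] at hl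
  | succ n ih =>
    intro x y p hl hx hy
    cases p with
    | nil =>
      refine ⟨Walk.nil, le_refl 0, fun hmem => ?_⟩
      simp only [Walk.support_nil, List.mem_singleton] at hmem
      exact absurd hmem.symm hx
    | @cons _ c _ h' p' =>
      by_cases hc : w = c
      · subst hc
        have hx_uv : x = u ∨ x = v := (adj'_w_iff huv hw hwu hwv).mp h'.symm
        cases p' with
        | nil => exact absurd rfl hy
        | @cons _ c2 _ h2 p2 =>
          have hc2 : c2 = u ∨ c2 = v := (adj'_w_iff huv hw hwu hwv).mp h2
          have hc2w : c2 ≠ w := h2.ne'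
          have hl2 : p2.length ≤ n := by
            simp only [Walk.length_cons] at hl
            omega
          obtain ⟨q2, hq2, -⟩ := ih p2 hl2 hc2w hy
          by_cases hxc2 : c2 = x
          · subst hxc2
            refine ⟨q2, ?_, fun _ => ?_⟩ <;> simp only [Walk.length_cons] <;> omega
          · have hadj : G.Adj x c2 := by
              rcases hx_uv with rfl | rfl <;> rcases hc2 with h3 | h3
              · exact absurd h3 (fun hh => hxc2 hh)
              · exact h3 ▸ huv
              · exact h3 ▸ huv.symm
              · exact absurd h3 (fun hh => hxc2 hh)
            refine ⟨Walk.cons hadj q2, ?_, fun _ => ?_⟩ <;>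
              simp only [Walk.length_cons] <;> omega
      · have hadj : G.Adj x c :=
          ((adj'_of_ne huv hw hwu hwv hx (Ne.symm hc)).mp h').1
        have hl1 : p'.length ≤ n := by
          simp only [Walk.length_cons] at hl
          omega
        obtain ⟨q', hq', hs⟩ := ih p' hl1 (Ne.symm hc) hy
        refine ⟨Walk.cons hadj q', ?_, fun hmem => ?_⟩
        · simp only [Walk.length_cons]; omega
        · have hmem' : w ∈ p'.support := by
            simp only [Walk.support_cons, List.mem_cons] at hmem
            rcases hmem with h3 | h3
            · exact absurd h3.symm hx
            · exact h3
          have := hs hmem'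
          simp only [Walk.length_cons]
          omega

lemma reachable_SD_down {x y : ℕ} (hx : x ≠ w) (hy : y ≠ w)
    (h : (SD G u v w).Reachable x y) : G.Reachable x y := by
  obtain ⟨p⟩ := h
  obtain ⟨q, -, -⟩ := walk_down huv hw hwu hwv p.length p le_rfl hx hy
  exact ⟨q⟩

lemma dist_le_SD {x y : ℕ} (hx : x ≠ w) (hy : y ≠ w) (hr : G.Reachable x y) :
    G.dist x y ≤ (SD G u v w).dist x y := by
  obtain ⟨p, hp⟩ := (reachable_SD huv hw hwu hwv hr).exists_walk_length_eq_dist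
  obtain ⟨q, hq, -⟩ := walk_down huv hw hwu hwv p.length p le_rfl hx hy
  calc G.dist x y ≤ q.length := dist_le q
    _ ≤ p.length := hq
    _ = _ := hp

lemma edges_of_not_in_support {x y : ℕ} (p : (SD G u v w).Walk x y)
    (hwp : w ∉ p.support) : ∀ e ∈ p.edges, e ∈ G.edgeSet ∧ e ≠ s(u, v) := by
  intro e
  induction e with
  | _ c d =>
    intro hep
    refine edge_SD_of_not_w huv hw hwu hwv (p.edges_subset_edgeSet hep) ?_
    rw [Sym2.mem_iff]
    push_neg
    exact ⟨fun h3 => hwp (h3 ▸ p.fst_mem_support_of_mem_edges hep),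
      fun h3 => hwp (h3 ▸ p.snd_mem_support_of_mem_edges hep)⟩

lemma dist_lt_SD (hacyc : G.IsAcyclic) {x y : ℕ} (hx : x ≠ w) (hy : y ≠ w)
    (hr : G.Reachable x y) (P : G.Walk x y) (hP : P.IsPath) (he : s(u, v) ∈ P.edges) :
    G.dist x y < (SD G u v w).dist x y := by
  obtain ⟨p, hp⟩ := (reachable_SD huv hw hwu hwv hr).exists_walk_length_eq_dist
  by_cases hwp : w ∈ p.support
  · obtain ⟨q, -, hstrict⟩ := walk_down huv hw hwu hwv p.length p le_rfl hx hy
    calc G.dist x y ≤ q.length := dist_le q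
      _ < p.length := hstrict hwp
      _ = _ := hp
  · exfalso
    have hE := edges_of_not_in_support huv hw hwu hwv p hwp
    set q := p.transfer G (fun e hep => (hE e hep).1) with hqdef
    have huniq := isAcyclic_iff_path_unique.mp hacyc ⟨q.bypass, q.bypass_isPath⟩ ⟨P, hP⟩
    have hQP : q.bypass = P := Subtype.ext_iff.mp huniq
    have h1 : s(u, v) ∈ q.bypass.edges := hQP ▸ he
    have h2 : s(u, v) ∈ q.edges := q.edges_bypass_subset h1
    rw [Walk.edges_transfer] at h2
    exact (hE _ h2).2 rfl

lemma acyclic_SD (hacyc : G.IsAcyclic) : (SD G u v w).IsAcyclic := by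
  intro z c hc
  by_cases hwz : w ∈ c.support
  · have hd := hc.rotate hwz
    revert hd
    generalize c.rotate w hwz = d
    intro hd
    cases d with
    | nil => exact hd.ne_nil rfl
    | @cons _ x₁ _ h₁ d₁ =>
      have hx₁ : x₁ = u ∨ x₁ = v := (adj'_w_iff huv hw hwu hwv).mp h₁
      cases hrev : d₁.reverse with
      | nil =>
        have hlen : d₁.length = 0 := by
          have := congrArg Walk.length hrev
          simpa using this
        exact h₁.ne' (Walk.eq_of_length_eq_zero hlen)
      | @cons _ x₂ _ h₂ d₂ =>
        have hx₂ : x₂ = u ∨ x₂ = v := (adj'_w_iff huv hw hwu hwv).mp h₂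
        have hd₁nodup : d₁.support.Nodup := by
          have := hd.support_nodup
          simpa [Walk.support_cons] using this
        have hrevsup : d₁.support.reverse = w :: d₂.support := by
          rw [← Walk.support_reverse, hrev, Walk.support_cons]
        have hwd₂ : w ∉ d₂.support := by
          have : (w :: d₂.support).Nodup := hrevsup ▸ (List.nodup_reverse.mpr hd₁nodup)
          exact (List.nodup_cons.mp this).1
        have hne12 : x₁ ≠ x₂ := by
          rintro rfl
          have hnodup := hd.isTrail.edges_nodup
          rw [Walk.edges_cons] at hnodup
          have h1 : s(w, x₁) ∉ d₁.edges := (List.nodup_cons.mp hnodup).1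
          have h2 : s(w, x₁) ∈ d₁.edges := by
            have : s(w, x₁) ∈ d₁.reverse.edges := by
              rw [hrev, Walk.edges_cons]
              exact List.mem_cons_self ..
            rwa [Walk.edges_reverse, List.mem_reverse] at this
          exact h1 h2
        have hadj : G.Adj x₂ x₁ := by
          rcases hx₁ with rfl | rfl <;> rcases hx₂ with h3 | h3
          · exact absurd h3 (fun hh => hne12 hh.symm)
          · exact h3 ▸ huv.symm
          · exact h3 ▸ huv
          · exact absurd h3 (fun hh => hne12 hh.symm)
        have hE2 := edges_of_not_in_support huv hw hwu hwv d₂ hwd₂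
        set q := d₂.transfer G (fun e hep => (hE2 e hep).1) with hqdef
        have huniq := isAcyclic_iff_path_unique.mp hacyc ⟨q.bypass, q.bypass_isPath⟩
          (Path.singleton hadj)
        have hQP : q.bypass = ((Path.singleton hadj : G.Path x₂ x₁) : G.Walk x₂ x₁) := Subtype.ext_iff.mp huniq
        have h1 : s(x₂, x₁) ∈ q.bypass.edges := by
          rw [hQP]
          exact Path.mk'_mem_edges_singleton hadj
        have h2 : s(x₂, x₁) ∈ q.edges := q.edges_bypass_subset h1
        rw [Walk.edges_transfer] at h2
        have h3 : s(x₂, x₁) = s(u, v) := by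
          rw [Sym2.eq_iff]
          rcases hx₁ with rfl | rfl <;> rcases hx₂ with rfl | rfl
          · exact absurd rfl hne12
          · exact Or.inr ⟨rfl, rfl⟩
          · exact Or.inl ⟨rfl, rfl⟩
          · exact absurd rfl hne12
        exact (hE2 _ h2).2 h3
  · have hE : ∀ e ∈ c.edges, e ∈ G.edgeSet :=
      fun e hep => (edges_of_not_in_support huv hw hwu hwv c hwz e hep).1
    exact hacyc (c.transfer G hE) (hc.transfer hE)
end Step

lemma support_finite {G : SimpleGraph ℕ} (hfin : G.edgeSet.Finite) : G.support.Finite := by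
  have hsub : G.support ⊆ ⋃ e ∈ G.edgeSet, {x | x ∈ e} := by
    intro x hx
    obtain ⟨y, hy⟩ := (SimpleGraph.mem_support G).mp hx
    exact Set.mem_biUnion ((SimpleGraph.mem_edgeSet G).mpr hy) (Sym2.mem_mk_left x y)
  refine Set.Finite.subset (Set.Finite.biUnion hfin fun e _ => ?_) hsub
  induction e with
  | _ c d =>
    refine Set.Finite.subset ((Set.finite_singleton d).insert c) ?_
    intro z hz
    rw [Set.mem_setOf_eq, Sym2.mem_iff] at hz
    rcases hz with rfl | rfl
    · exact Set.mem_insert _ _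
    · exact Set.mem_insert_of_mem _ rfl

open scoped Classical in
noncomputable def phiTerm (n : ℕ) (G : SimpleGraph ℕ) (x y : ℕ) : ℕ :=
  if x ≠ y ∧ 3 ≤ degN G x ∧ 3 ≤ degN G y ∧ G.Reachable x y then n + 1 - G.dist x y else 0

noncomputable def phi (n : ℕ) (T : Finset ℕ) (G : SimpleGraph ℕ) : ℕ :=
  ∑ x ∈ T, ∑ y ∈ T, phiTerm n G x y

lemma main_rec (n : ℕ) (T : Finset ℕ) :
    ∀ (k : ℕ) (G : SimpleGraph ℕ), G.edgeSet.Finite → G.IsAcyclic →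
      (∀ v, 3 ≤ degN G v → v ∈ T) → phi n T G ≤ k →
      ∃ G' : SimpleGraph ℕ, IsSubdivision G G' ∧ G'.edgeSet.Finite ∧
        (∀ x y, x ≠ y → 3 ≤ degN G' x → 3 ≤ degN G' y → G'.Reachable x y →
          n < G'.dist x y) := by
  intro k
  induction k with
  | zero =>
    intro G hfin hacyc hT hphi
    refine ⟨G, Relation.ReflTransGen.refl, hfin, fun x y hxy h3x h3y hr => ?_⟩
    have hx : x ∈ T := hT x h3x
    have hy : y ∈ T := hT y h3y
    have hphi0 : phi n T G = 0 := Nat.le_zero.mp hphi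
    have hterm : phiTerm n G x y = 0 := by
      have h1 := (Finset.sum_eq_zero_iff.mp hphi0) x hx
      exact (Finset.sum_eq_zero_iff.mp h1) y hy
    unfold phiTerm at hterm
    rw [if_pos ⟨hxy, h3x, h3y, hr⟩] at hterm
    omega
  | succ m ih =>
    intro G hfin hacyc hT hphi
    by_cases hphi0 : phi n T G = 0
    · refine ⟨G, Relation.ReflTransGen.refl, hfin, fun x y hxy h3x h3y hr => ?_⟩
      have hx : x ∈ T := hT x h3x
      have hy : y ∈ T := hT y h3y
      have hterm : phiTerm n G x y = 0 := by
        have h1 := (Finset.sum_eq_zero_iff.mp hphi0) x hx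
        exact (Finset.sum_eq_zero_iff.mp h1) y hy
      unfold phiTerm at hterm
      rw [if_pos ⟨hxy, h3x, h3y, hr⟩] at hterm
      omega
    · -- find a bad pair
      have hex : ∃ x ∈ T, ∃ y ∈ T, phiTerm n G x y ≠ 0 := by
        by_contra hno
        push_neg at hno
        exact hphi0 (Finset.sum_eq_zero fun x hx => Finset.sum_eq_zero fun y hy => hno x hx y hy)
      obtain ⟨x, hxT, y, hyT, hterm⟩ := hex
      have hcond : (x ≠ y ∧ 3 ≤ degN G x ∧ 3 ≤ degN G y ∧ G.Reachable x y) ∧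
          G.dist x y ≤ n := by
        unfold phiTerm at hterm
        by_cases hc : x ≠ y ∧ 3 ≤ degN G x ∧ 3 ≤ degN G y ∧ G.Reachable x y
        · rw [if_pos hc] at hterm
          exact ⟨hc, by omega⟩
        · rw [if_neg hc] at hterm
          exact absurd rfl hterm
      obtain ⟨⟨hxy, h3x, h3y, hr⟩, hdn⟩ := hcond
      obtain ⟨p0⟩ := id hr
      have hP : p0.bypass.IsPath := p0.bypass_isPath
      cases hPc : p0.bypass with
      | nil => exact absurd rfl hxy
      | @cons _ c _ h' P' =>
        have heP : s(x, c) ∈ p0.bypass.edges := by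
          rw [hPc, Walk.edges_cons]
          exact List.mem_cons_self ..
        -- fresh vertex
        obtain ⟨w, hwS⟩ := Infinite.exists_notMem_finset
          ((support_finite hfin).toFinset ∪ T)
        have hwsupp : w ∉ G.support := fun h =>
          hwS (Finset.mem_union_left _ ((support_finite hfin).mem_toFinset.mpr h))
        have hwTnot : w ∉ T := fun h => hwS (Finset.mem_union_right _ h)
        have hw : G.neighborSet w = ∅ := by
          rw [Set.eq_empty_iff_forall_notMem]
          intro z hz
          exact hwsupp ((SimpleGraph.mem_support G).mpr ⟨z, hz⟩)
        have hwx : w ≠ x := fun h =>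
          hwsupp ((SimpleGraph.mem_support G).mpr ⟨c, h ▸ h'⟩)
        have hwc : w ≠ c := fun h =>
          hwsupp ((SimpleGraph.mem_support G).mpr ⟨x, h ▸ h'.symm⟩)
        set G₂ := SD G x c w with hG₂
        have hfin₂ : G₂.edgeSet.Finite := edgeSet_SD_finite hfin
        have hacyc₂ : G₂.IsAcyclic := acyclic_SD h' hw hwx hwc hacyc
        have hdeg₂ : ∀ z, z ≠ w → degN G₂ z = degN G z :=
          fun z hz => degN_SD h' hw hwx hwc hfin hz
        have hT₂ : ∀ v', 3 ≤ degN G₂ v' → v' ∈ T := by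
          intro v' h3
          by_cases hv'w : v' = w
          · subst hv'w
            rw [degN_SD_w h' hw hwx hwc] at h3
            omega
          · rw [hdeg₂ v' hv'w] at h3
            exact hT v' h3
        -- pointwise inequality
        have hptle : ∀ i ∈ T, ∀ j ∈ T, phiTerm n G₂ i j ≤ phiTerm n G i j := by
          intro i hi j hj
          have hiw : i ≠ w := fun h => hwTnot (h ▸ hi)
          have hjw : j ≠ w := fun h => hwTnot (h ▸ hj)
          unfold phiTerm
          split_ifs with h₂ h₁
          · -- both conditions
            obtain ⟨hij, h3i, h3j, hr₂⟩ := h₂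
            have hr₁ : G.Reachable i j := reachable_SD_down h' hw hwx hwc hiw hjw hr₂
            have := dist_le_SD h' hw hwx hwc hiw hjw hr₁
            rw [← hG₂] at this
            omega
          · -- cond₂ true, cond₁ false: contradiction
            exfalso
            obtain ⟨hij, h3i, h3j, hr₂⟩ := h₂
            refine h₁ ⟨hij, ?_, ?_, reachable_SD_down h' hw hwx hwc hiw hjw hr₂⟩
            · rw [← hdeg₂ i hiw]; exact h3i
            · rw [← hdeg₂ j hjw]; exact h3j
          · exact Nat.zero_le _
          · exact Nat.zero_le _
        have hstrict : phiTerm n G₂ x y < phiTerm n G x y := by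
          have hxw : x ≠ w := Ne.symm hwx
          have hyw : y ≠ w := fun h => hwTnot (h ▸ hyT)
          have hdlt : G.dist x y < G₂.dist x y :=
            dist_lt_SD h' hw hwx hwc hacyc hxw hyw hr p0.bypass hP heP
          have hr₂ : G₂.Reachable x y := reachable_SD h' hw hwx hwc hr
          have h3x₂ : 3 ≤ degN G₂ x := by rw [hdeg₂ x hxw]; exact h3x
          have h3y₂ : 3 ≤ degN G₂ y := by rw [hdeg₂ y hyw]; exact h3y
          have e2 : phiTerm n G₂ x y = n + 1 - G₂.dist x y := by
            unfold phiTerm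
            rw [if_pos ⟨hxy, h3x₂, h3y₂, hr₂⟩]
          have e1 : phiTerm n G x y = n + 1 - G.dist x y := by
            unfold phiTerm
            rw [if_pos ⟨hxy, h3x, h3y, hr⟩]
          rw [e1, e2]
          omega
        have hphilt : phi n T G₂ < phi n T G := by
          unfold phi
          apply Finset.sum_lt_sum (fun i hi => Finset.sum_le_sum fun j hj => hptle i hi j hj)
          exact ⟨x, hxT, Finset.sum_lt_sum (fun j hj => hptle x hxT j hj) ⟨y, hyT, hstrict⟩⟩
        obtain ⟨G₃, hsub₃, hfin₃, hfar₃⟩ := ih G₂ hfin₂ hacyc₂ hT₂ (by omega)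
        exact ⟨G₃, Relation.ReflTransGen.head (elemSubdiv_SD h' hw hwx hwc) hsub₃,
          hfin₃, hfar₃⟩
end SubProof

/-- If `H` is a (finite) forest with two distinct vertices of degree at least 3
in the same connected component, then some subdivision of `H` does not contain
`H` as a subgraph. -/
theorem exists_subdivision_not_containing (H : SimpleGraph ℕ)
    (hfin : H.edgeSet.Finite)
    (hforest : ∀ (v : ℕ) (c : H.Walk v v), ¬ c.IsCycle)
    (a b : ℕ) (hab : a ≠ b) (ha : 3 ≤ degN H a) (hb : 3 ≤ degN H b)
    (hreach : H.Reachable a b) :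
    ∃ G : SimpleGraph ℕ, IsSubdivision H G ∧ ¬ SubgraphOf H G := by
  classical
  set T := (SubProof.support_finite hfin).toFinset with hT
  set n := H.dist a b with hn
  have hacyc : H.IsAcyclic := hforest
  have hTprop : ∀ v, 3 ≤ degN H v → v ∈ T := by
    intro v h3
    have hne : (H.neighborSet v).Nonempty := by
      apply Set.nonempty_of_ncard_ne_zero
      unfold degN at h3
      omega
    obtain ⟨z, hz⟩ := hne
    exact (SubProof.support_finite hfin).mem_toFinset.mpr
      ((SimpleGraph.mem_support H).mpr ⟨z, hz⟩)
  obtain ⟨G, hsub, hfinG, hfar⟩ :=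
    SubProof.main_rec n T (SubProof.phi n T H) H hfin hacyc hTprop le_rfl
  refine ⟨G, hsub, ?_⟩
  rintro ⟨f, hinj⟩
  -- degrees of images
  have himg : ∀ z : ℕ, 3 ≤ degN H z → 3 ≤ degN G (f z) := by
    intro z h3
    have hsubn : f '' (H.neighborSet z) ⊆ G.neighborSet (f z) := by
      rintro _ ⟨y, hy, rfl⟩
      exact f.map_adj hy
    have h1 : (f '' (H.neighborSet z)).ncard = (H.neighborSet z).ncard :=
      Set.ncard_image_of_injective _ hinj
    have h2 : (f '' (H.neighborSet z)).ncard ≤ (G.neighborSet (f z)).ncard :=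
      Set.ncard_le_ncard hsubn (SubProof.nbr_finite hfinG (f z))
    unfold degN at h3 ⊢
    omega
  have h3a : 3 ≤ degN G (f a) := himg a ha
  have h3b : 3 ≤ degN G (f b) := himg b hb
  have hne : f a ≠ f b := fun h => hab (hinj h)
  have hreachG : G.Reachable (f a) (f b) := hreach.map f
  have hdist : G.dist (f a) (f b) ≤ n := by
    obtain ⟨p, hp⟩ := hreach.exists_walk_length_eq_dist
    have := SimpleGraph.dist_le (p.map f)
    rwa [SimpleGraph.Walk.length_map, hp] at this
  have := hfar (f a) (f b) hne h3a h3b hreachG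
  omega
end

section
/- Every nontrivial minor-closed graph property is sparse: if a class of graphs is closed under minors and does not contain all graphs, then there is a constant c such that every graph G in the class satisfies |E(G)| ≤ c·|V(G)|. -/
open SimpleGraph

/-! ### Auxiliary development: Mader's theorem -/

section MaderAux
universe u
variable {V : Type u}

/-- Branch sets witnessing a `K k` minor inside the set `S`. -/
def KMin (k : ℕ) (G : SimpleGraph V) (S : Set V) : Prop :=
  ∃ φ : Fin k → Set V,
    (∀ i, φ i ⊆ S) ∧ (∀ i, (φ i).Nonempty) ∧ (∀ i, (G.induce (φ i)).Connected) ∧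
    (∀ i j, i ≠ j → Disjoint (φ i) (φ j)) ∧
    (∀ i j, i ≠ j → ∃ a ∈ φ i, ∃ b ∈ φ j, G.Adj a b)

lemma KMin.mono {k : ℕ} {G G' : SimpleGraph V} {S S' : Set V} (hG : G ≤ G') (hS : S ⊆ S')
    (h : KMin k G S) : KMin k G' S' := by
  obtain ⟨φ, h1, h2, h3, h4, h5⟩ := h
  refine ⟨φ, fun i => (h1 i).trans hS, h2, fun i => (h3 i).mono ?_, h4,
    fun i j hij => ?_⟩
  · intro a b hab
    exact hG hab
  · obtain ⟨a, ha, b, hb, hab⟩ := h5 i j hij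
    exact ⟨a, ha, b, hb, hG hab⟩

lemma connected_induce_singleton (G : SimpleGraph V) (x : V) :
    (G.induce ({x} : Set V)).Connected := by
  haveI : Nonempty ({x} : Set V) := ⟨⟨x, rfl⟩⟩
  refine ⟨fun a b => ?_⟩
  obtain ⟨a, ha⟩ := a
  obtain ⟨b, hb⟩ := b
  rcases ha; rcases hb
  rfl

/-- Contract edge `xy`, keeping the same vertex type (`y` becomes isolated). -/
def ctr (G : SimpleGraph V) (x y : V) : SimpleGraph V where
  Adj a b := a ≠ b ∧ ((G.Adj a b ∧ a ≠ y ∧ b ≠ y) ∨ (a = x ∧ G.Adj y b ∧ b ≠ y) ∨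
      (b = x ∧ G.Adj y a ∧ a ≠ y))
  symm := by
    constructor
    rintro a b ⟨hab, h⟩
    refine ⟨hab.symm, ?_⟩
    rcases h with ⟨h1, h2, h3⟩ | ⟨h1, h2, h3⟩ | ⟨h1, h2, h3⟩
    · exact Or.inl ⟨h1.symm, h3, h2⟩
    · exact Or.inr (Or.inr ⟨h1, h2, h3⟩)
    · exact Or.inr (Or.inl ⟨h1, h2, h3⟩)
  loopless := by constructor; rintro a ⟨hab, -⟩; exact hab rfl

lemma KMin_ctr {G : SimpleGraph V} {x y : V} (hxy : G.Adj x y) {k : ℕ} {T : Set V}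
    (hyT : y ∉ T) (h : KMin k (ctr G x y) T) : KMin k G (T ∪ {y}) := by
  classical
  obtain ⟨φ, hsub, hne, hconn, hdisj, hadj⟩ := h
  set ψ : Fin k → Set V := fun i => if x ∈ φ i then φ i ∪ {y} else φ i with hψ
  have hφψ : ∀ i, φ i ⊆ ψ i := by
    intro i a ha; by_cases hx : x ∈ φ i <;> simp [ψ, hx, ha]
  have hyψ : ∀ i, x ∈ φ i → y ∈ ψ i := by intro i hx; simp [ψ, hx]
  have hymem : ∀ i a, a ∈ ψ i → a ∈ φ i ∨ (a = y ∧ x ∈ φ i) := by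
    intro i a ha
    by_cases hx : x ∈ φ i
    · simp only [ψ, if_pos hx] at ha
      rcases ha with h | h
      · exact Or.inl h
      · exact Or.inr ⟨h, hx⟩
    · simp only [ψ, if_neg hx] at ha; exact Or.inl ha
  refine ⟨ψ, ?_, ?_, ?_, ?_, ?_⟩
  · intro i a ha
    rcases hymem i a ha with h | ⟨rfl, -⟩
    · exact Or.inl (hsub i h)
    · exact Or.inr rfl
  · intro i; exact (hne i).mono (hφψ i)
  · intro i
    by_cases hx : x ∈ φ i
    · have hψi : ψ i = φ i ∪ {y} := if_pos hx
      rw [hψi]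
      have hxm : x ∈ φ i ∪ ({y} : Set V) := Or.inl hx
      have hym : y ∈ φ i ∪ ({y} : Set V) := Or.inr rfl
      have hstep : ∀ a b (ha : a ∈ φ i ∪ ({y} : Set V)) (hb : b ∈ φ i ∪ ({y} : Set V)),
          G.Adj a b → (G.induce (φ i ∪ ({y} : Set V))).Reachable ⟨a, ha⟩ ⟨b, hb⟩ := by
        intro a b ha hb hab
        exact Adj.reachable (by simpa using hab)
      have key : ∀ (a b : ↥(φ i)), ((ctr G x y).induce (φ i)).Walk a b →
          (G.induce (φ i ∪ ({y} : Set V))).Reachable ⟨a, Or.inl a.2⟩ ⟨b, Or.inl b.2⟩ := by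
        intro a b p
        induction p with
        | nil => exact Reachable.refl _
        | @cons u v w hadj' q ih =>
          refine Reachable.trans ?_ ih
          have huv : (ctr G x y).Adj ↑u ↑v := hadj'
          obtain ⟨hne', h1 | h2 | h3⟩ := huv
          · exact hstep _ _ (Or.inl u.2) (Or.inl v.2) h1.1
          · obtain ⟨hux, hyv, -⟩ := h2
            refine Reachable.trans (hstep ↑u y (Or.inl u.2) hym ?_)
              (hstep y ↑v hym (Or.inl v.2) hyv)
            rw [hux]; exact hxy
          · obtain ⟨hvx, hyu, -⟩ := h3
            refine Reachable.trans (hstep ↑u y (Or.inl u.2) hym hyu.symm)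
              (hstep y ↑v hym (Or.inl v.2) ?_)
            rw [hvx]; exact hxy.symm
      haveI : Nonempty ↥(φ i ∪ ({y} : Set V)) := ⟨⟨x, hxm⟩⟩
      refine ⟨fun a b => ?_⟩
      have hfrom : ∀ (c : ↥(φ i ∪ ({y} : Set V))),
          (G.induce (φ i ∪ ({y} : Set V))).Reachable ⟨x, hxm⟩ c := by
        rintro ⟨c, hc | hc⟩
        · obtain ⟨p⟩ := (hconn i) ⟨x, hx⟩ ⟨c, hc⟩
          exact key _ _ p
        · rcases hc
          exact hstep x y hxm hym hxy
      exact (hfrom a).symm.trans (hfrom b)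
    · have hψi : ψ i = φ i := if_neg hx
      rw [hψi]
      refine (hconn i).mono ?_
      rintro ⟨a, ha⟩ ⟨b, hb⟩ hab
      simp only [comap_adj] at hab ⊢
      obtain ⟨hne', h1 | h2 | h3⟩ := hab
      · exact h1.1
      · exact absurd (h2.1 ▸ ha) hx
      · exact absurd (h3.1 ▸ hb) hx
  · intro i j hij
    have hd := hdisj i j hij
    rw [Set.disjoint_left]
    intro a hai haj
    rcases hymem i a hai with h1 | ⟨hay, hxi⟩
    · rcases hymem j a haj with h2 | ⟨hay2, hxj⟩
      · exact Set.disjoint_left.mp hd h1 h2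
      · exact hyT (hay2 ▸ hsub i h1)
    · rcases hymem j a haj with h2 | ⟨-, hxj⟩
      · exact hyT (hay ▸ hsub j h2)
      · exact Set.disjoint_left.mp hd hxi hxj
  · intro i j hij
    obtain ⟨a, hai, b, hbj, hab⟩ := hadj i j hij
    obtain ⟨hne', h1 | h2 | h3⟩ := hab
    · exact ⟨a, hφψ i hai, b, hφψ j hbj, h1.1⟩
    · exact ⟨y, hyψ i (h2.1 ▸ hai), b, hφψ j hbj, h2.2.1⟩
    · exact ⟨a, hφψ i hai, y, hyψ j (h3.1 ▸ hbj), h3.2.1.symm⟩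

lemma edgeSet_finite_of {G : SimpleGraph V} {S : Set V} (hS : S.Finite)
    (hG : ∀ ⦃a b⦄, G.Adj a b → a ∈ S) : G.edgeSet.Finite := by
  apply Set.Finite.subset ((hS.prod hS).image (fun p : V × V => s(p.1, p.2)))
  intro e he
  induction e using Sym2.ind with
  | _ a b => exact ⟨(a, b), ⟨hG he, hG (G.adj_symm he)⟩, rfl⟩

lemma neighborSet_subset_of {G : SimpleGraph V} {S : Set V}
    (hG : ∀ ⦃a b⦄, G.Adj a b → a ∈ S) (v : V) : G.neighborSet v ⊆ S :=
  fun _ hb => hG (G.adj_symm hb)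

lemma exists_adj_of_edge {G : SimpleGraph V} (h : G.edgeSet.Nonempty) : ∃ x y, G.Adj x y := by
  obtain ⟨e, he⟩ := h
  induction e using Sym2.ind with
  | _ a b => exact ⟨a, b, he⟩

lemma ctr_card {G : SimpleGraph V} {x y : V}
    (hE : G.edgeSet.Finite) (hNy : (G.neighborSet y).Finite)
    (hE' : (ctr G x y).edgeSet.Finite) :
    G.edgeSet.ncard ≤
      (ctr G x y).edgeSet.ncard + ((G.neighborSet x ∩ G.neighborSet y).ncard + 1) := by
  classical
  set B : Set (Sym2 V) := G.edgeSet \ G.incidenceSet y with hB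
  set D : Set V := G.neighborSet y \ (G.neighborSet x ∪ {x}) with hD
  set C : Set (Sym2 V) := (fun c => s(x, c)) '' D with hC
  have hBsub : B ⊆ (ctr G x y).edgeSet := by
    rintro e ⟨he, hye⟩
    induction e using Sym2.ind with
    | _ a b =>
      have hadj : G.Adj a b := he
      have hy : y ∉ s(a, b) := fun hmem => hye ⟨he, hmem⟩
      rw [Sym2.mem_iff] at hy
      push_neg at hy
      exact ⟨hadj.ne, Or.inl ⟨hadj, fun h => hy.1 h.symm, fun h => hy.2 h.symm⟩⟩
  have hCsub : C ⊆ (ctr G x y).edgeSet := by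
    rintro e ⟨c, ⟨hc1, hc2⟩, rfl⟩
    have hcx : c ≠ x := fun h => hc2 (Or.inr h)
    exact ⟨fun h => hcx h.symm, Or.inr (Or.inl ⟨rfl, hc1, (G.ne_of_adj hc1).symm⟩)⟩
  have hdisjBC : Disjoint B C := by
    rw [Set.disjoint_left]
    rintro e ⟨he, -⟩ ⟨c, ⟨-, hc2⟩, rfl⟩
    exact hc2 (Or.inl ((SimpleGraph.mem_edgeSet G).mp he))
  have hDfin : D.Finite := hNy.diff
  have hCfin : C.Finite := hDfin.image _
  have hBC : (B ∪ C).ncard = B.ncard + C.ncard :=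
    Set.ncard_union_eq hdisjBC hE.diff hCfin
  have hle : (B ∪ C).ncard ≤ (ctr G x y).edgeSet.ncard :=
    Set.ncard_le_ncard (Set.union_subset hBsub hCsub) hE'
  have hincsub : G.incidenceSet y ⊆ G.edgeSet := G.incidenceSet_subset y
  have hBcard : B.ncard = G.edgeSet.ncard - (G.incidenceSet y).ncard :=
    Set.ncard_diff hincsub (hE.subset hincsub)
  have hincle : (G.incidenceSet y).ncard ≤ G.edgeSet.ncard :=
    Set.ncard_le_ncard hincsub hE
  have hinc : (G.incidenceSet y).ncard = (G.neighborSet y).ncard := by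
    rw [← Nat.card_coe_set_eq, ← Nat.card_coe_set_eq]
    exact Nat.card_congr (G.incidenceSetEquivNeighborSet y)
  have hCcard : C.ncard = D.ncard :=
    Set.ncard_image_of_injective _ (fun c c' h => Sym2.congr_right.mp h)
  have hDcard : (G.neighborSet y).ncard ≤
      D.ncard + ((G.neighborSet x ∩ G.neighborSet y).ncard + 1) := by
    have hsub : G.neighborSet y ⊆ D ∪ ((G.neighborSet x ∩ G.neighborSet y) ∪ {x}) := by
      intro v hv
      by_cases h1 : v ∈ G.neighborSet x
      · exact Or.inr (Or.inl ⟨h1, hv⟩)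
      · by_cases h2 : v = x
        · exact Or.inr (Or.inr h2)
        · exact Or.inl ⟨hv, fun h => h.elim h1 h2⟩
    calc (G.neighborSet y).ncard
        ≤ (D ∪ ((G.neighborSet x ∩ G.neighborSet y) ∪ {x})).ncard :=
          Set.ncard_le_ncard hsub
            ((hDfin.union (((hNy.subset Set.inter_subset_right).union
              (Set.finite_singleton x)))))
      _ ≤ D.ncard + ((G.neighborSet x ∩ G.neighborSet y) ∪ {x}).ncard :=
          Set.ncard_union_le _ _
      _ ≤ D.ncard + ((G.neighborSet x ∩ G.neighborSet y).ncard + ({x} : Set V).ncard) :=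
          Nat.add_le_add_left (Set.ncard_union_le _ _) _
      _ = D.ncard + ((G.neighborSet x ∩ G.neighborSet y).ncard + 1) := by
          rw [Set.ncard_singleton]
  omega

lemma induce_neighbor_card (G : SimpleGraph V) (N : Set V) (u : ↥N) :
    ((G.induce N).neighborSet u).ncard = (G.neighborSet ↑u ∩ N).ncard := by
  have himg : Subtype.val '' ((G.induce N).neighborSet u) = G.neighborSet ↑u ∩ N := by
    ext b
    constructor
    · rintro ⟨w, hw, rfl⟩
      exact ⟨hw, w.2⟩
    · rintro ⟨hb, hbN⟩
      exact ⟨⟨b, hbN⟩, hb, rfl⟩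
  rw [← himg, Set.ncard_image_of_injective _ Subtype.coe_injective]

lemma handshake (G : SimpleGraph V) {N : Set V} (hN : N.Finite) (d : ℕ)
    (hdeg : ∀ v : ↥N, d ≤ ((G.induce N).neighborSet v).ncard) :
    d * N.ncard ≤ 2 * (G.induce N).edgeSet.ncard := by
  classical
  haveI := hN.fintype
  have hsum := SimpleGraph.sum_degrees_eq_twice_card_edges (G.induce N)
  have hdeg' : ∀ v : ↥N, d ≤ (G.induce N).degree v := by
    intro v
    have : ((G.induce N).neighborSet v).ncard = (G.induce N).degree v := by
      rw [Set.ncard_eq_toFinset_card']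
      rfl
    rw [← this]
    exact hdeg v
  have hN' : N.ncard = Fintype.card ↥N := by
    rw [← Nat.card_coe_set_eq, Nat.card_eq_fintype_card]
  have hEcard : (G.induce N).edgeSet.ncard = (G.induce N).edgeFinset.card := by
    rw [← SimpleGraph.coe_edgeFinset, Set.ncard_coe_finset]
  calc d * N.ncard = ∑ _v : ↥N, d := by rw [Finset.sum_const, Finset.card_univ, hN']; ring
    _ ≤ ∑ v : ↥N, (G.induce N).degree v := Finset.sum_le_sum (fun v _ => hdeg' v)
    _ = 2 * (G.induce N).edgeFinset.card := hsum
    _ = 2 * (G.induce N).edgeSet.ncard := by rw [hEcard]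

lemma conn_image {G : SimpleGraph V} {N : Set V} {t : Set ↥N}
    (h : ((G.induce N).induce t).Connected) : (G.induce (Subtype.val '' t)).Connected := by
  let f : ((G.induce N).induce t) →g G.induce (Subtype.val '' t) :=
    { toFun := fun a => ⟨↑↑a, ⟨↑a, a.2, rfl⟩⟩
      map_rel' := fun {a b} hab => by exact hab }
  apply h.map f
  rintro ⟨b, ⟨w, hw, rfl⟩⟩
  exact ⟨⟨w, hw⟩, rfl⟩

lemma KMin_induce {G : SimpleGraph V} {N : Set V} {k : ℕ}
    (h : KMin k (G.induce N) Set.univ) : KMin k G N := by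
  obtain ⟨φ, -, hne, hconn, hdisj, hadj⟩ := h
  refine ⟨fun i => Subtype.val '' φ i, ?_, ?_, ?_, ?_, ?_⟩
  · rintro i a ⟨w, -, rfl⟩
    exact w.2
  · intro i
    exact (hne i).image _
  · intro i
    exact conn_image (hconn i)
  · intro i j hij
    exact (Set.disjoint_image_iff Subtype.coe_injective).mpr (hdisj i j hij)
  · intro i j hij
    obtain ⟨a, ha, b, hb, hab⟩ := hadj i j hij
    exact ⟨↑a, ⟨a, ha, rfl⟩, ↑b, ⟨b, hb, rfl⟩, hab⟩

lemma KMin_cons {G : SimpleGraph V} {k : ℕ} {N : Set V} {x : V} (hxN : x ∉ N)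
    (hadjx : ∀ b ∈ N, G.Adj x b) (h : KMin k G N) : KMin (k + 1) G (insert x N) := by
  obtain ⟨φ, hsub, hne, hconn, hdisj, hadj⟩ := h
  refine ⟨Fin.cons {x} φ, ?_, ?_, ?_, ?_, ?_⟩
  · intro i
    induction i using Fin.cases with
    | zero =>
      rw [Fin.cons_zero]
      exact Set.singleton_subset_iff.mpr (Set.mem_insert x N)
    | succ i =>
      rw [Fin.cons_succ]
      exact (hsub i).trans (Set.subset_insert x N)
  · intro i
    induction i using Fin.cases with
    | zero => rw [Fin.cons_zero]; exact Set.singleton_nonempty x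
    | succ i => rw [Fin.cons_succ]; exact hne i
  · intro i
    induction i using Fin.cases with
    | zero => rw [Fin.cons_zero]; exact connected_induce_singleton G x
    | succ i => rw [Fin.cons_succ]; exact hconn i
  · intro i j hij
    induction i using Fin.cases with
    | zero =>
      induction j using Fin.cases with
      | zero => exact absurd rfl hij
      | succ j =>
        rw [Fin.cons_zero, Fin.cons_succ]
        exact Set.disjoint_singleton_left.mpr (fun hc => hxN (hsub j hc))
    | succ i =>
      induction j using Fin.cases with
      | zero =>
        rw [Fin.cons_zero, Fin.cons_succ]
        exact (Set.disjoint_singleton_left.mpr (fun hc => hxN (hsub i hc))).symm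
      | succ j =>
        rw [Fin.cons_succ, Fin.cons_succ]
        exact hdisj i j (fun hc => hij (by rw [hc]))
  · intro i j hij
    induction i using Fin.cases with
    | zero =>
      induction j using Fin.cases with
      | zero => exact absurd rfl hij
      | succ j =>
        obtain ⟨b, hb⟩ := hne j
        rw [Fin.cons_zero, Fin.cons_succ]
        exact ⟨x, Set.mem_singleton x, b, hb, hadjx b (hsub j hb)⟩
    | succ i =>
      induction j using Fin.cases with
      | zero =>
        obtain ⟨a, ha⟩ := hne i
        rw [Fin.cons_zero, Fin.cons_succ]
        exact ⟨a, ha, x, Set.mem_singleton x, (hadjx a (hsub i ha)).symm⟩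
      | succ j =>
        rw [Fin.cons_succ, Fin.cons_succ]
        exact hadj i j (fun hc => hij (by rw [hc]))

lemma KMin_two {G : SimpleGraph V} {S : Set V} {a b : V} (hab : G.Adj a b)
    (ha : a ∈ S) (hb : b ∈ S) : KMin 2 G S := by
  refine ⟨Fin.cons {a} (fun _ => {b}), ?_, ?_, ?_, ?_, ?_⟩
  · intro i
    induction i using Fin.cases with
    | zero => rw [Fin.cons_zero]; exact Set.singleton_subset_iff.mpr ha
    | succ i => rw [Fin.cons_succ]; exact Set.singleton_subset_iff.mpr hb
  · intro i
    induction i using Fin.cases with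
    | zero => rw [Fin.cons_zero]; exact Set.singleton_nonempty a
    | succ i => rw [Fin.cons_succ]; exact Set.singleton_nonempty b
  · intro i
    induction i using Fin.cases with
    | zero => rw [Fin.cons_zero]; exact connected_induce_singleton G a
    | succ i => rw [Fin.cons_succ]; exact connected_induce_singleton G b
  · intro i j hij
    induction i using Fin.cases with
    | zero =>
      induction j using Fin.cases with
      | zero => exact absurd rfl hij
      | succ j =>
        rw [Fin.cons_zero, Fin.cons_succ]
        exact Set.disjoint_singleton.mpr hab.ne
    | succ i =>
      induction j using Fin.cases with
      | zero =>
        rw [Fin.cons_zero, Fin.cons_succ]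
        exact Set.disjoint_singleton.mpr hab.ne'
      | succ j =>
        exact absurd (congrArg Fin.succ (Subsingleton.elim i j)) hij
  · intro i j hij
    induction i using Fin.cases with
    | zero =>
      induction j using Fin.cases with
      | zero => exact absurd rfl hij
      | succ j =>
        rw [Fin.cons_zero, Fin.cons_succ]
        exact ⟨a, rfl, b, rfl, hab⟩
    | succ i =>
      induction j using Fin.cases with
      | zero =>
        rw [Fin.cons_zero, Fin.cons_succ]
        exact ⟨b, rfl, a, rfl, hab.symm⟩
      | succ j =>
        exact absurd (congrArg Fin.succ (Subsingleton.elim i j)) hij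

/-- The Mader constant. -/
def maderC : ℕ → ℕ
  | 0 => 0
  | h + 1 => 2 * maderC h + 2

theorem mader (h : ℕ) : ∀ (V : Type u) (G : SimpleGraph V) (S : Set V), S.Finite →
    (∀ ⦃a b⦄, G.Adj a b → a ∈ S) → maderC h * S.ncard < G.edgeSet.ncard →
    KMin (h + 2) G S := by
  induction h with
  | zero =>
    intro V G S hS hGS hcard
    have hpos : 0 < G.edgeSet.ncard := by simpa [maderC] using hcard
    obtain ⟨x, y, hxy⟩ := exists_adj_of_edge (Set.nonempty_of_ncard_ne_zero hpos.ne')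
    exact KMin_two hxy (hGS hxy) (hGS (G.adj_symm hxy))
  | succ h IH =>
    suffices H : ∀ (n : ℕ) (V : Type u) (G : SimpleGraph V) (S : Set V), S.ncard ≤ n →
        S.Finite → (∀ ⦃a b⦄, G.Adj a b → a ∈ S) →
        maderC (h + 1) * S.ncard < G.edgeSet.ncard → KMin (h + 3) G S by
      intro V G S hS hGS hcard
      exact H S.ncard V G S le_rfl hS hGS hcard
    intro n
    induction n with
    | zero =>
      intro V G S hn hS hGS hcard
      exfalso
      have hpos : 0 < G.edgeSet.ncard := lt_of_le_of_lt (Nat.zero_le _) hcard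
      obtain ⟨x, y, hxy⟩ := exists_adj_of_edge (Set.nonempty_of_ncard_ne_zero hpos.ne')
      have : 0 < S.ncard := (Set.ncard_pos hS).mpr ⟨x, hGS hxy⟩
      omega
    | succ n IHn =>
      intro V G S hn hS hGS hcard
      have hEfin : G.edgeSet.Finite := edgeSet_finite_of hS hGS
      have hepos : 0 < G.edgeSet.ncard := lt_of_le_of_lt (Nat.zero_le _) hcard
      by_cases hctr : ∃ x y, G.Adj x y ∧
          (G.neighborSet x ∩ G.neighborSet y).ncard + 1 ≤ maderC (h + 1)
      · -- contraction case
        obtain ⟨x, y, hxy, hcm⟩ := hctr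
        have hxS : x ∈ S := hGS hxy
        have hyS : y ∈ S := hGS (G.adj_symm hxy)
        have hGS' : ∀ ⦃a b⦄, (ctr G x y).Adj a b → a ∈ S \ {y} := by
          rintro a b ⟨hne', h1 | h2 | h3⟩
          · exact ⟨hGS h1.1, h1.2.1⟩
          · refine ⟨h2.1 ▸ hxS, ?_⟩
            rw [h2.1]
            exact hxy.ne
          · exact ⟨hGS (G.adj_symm h3.2.1), h3.2.2⟩
        have hSfin' : (S \ {y}).Finite := hS.diff
        have hncard' : (S \ {y}).ncard = S.ncard - 1 := by
          rw [Set.ncard_diff (by simpa using hyS) (Set.finite_singleton y),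
            Set.ncard_singleton]
        have hE'fin : (ctr G x y).edgeSet.Finite := edgeSet_finite_of hSfin' hGS'
        have hNyfin : (G.neighborSet y).Finite := hS.subset (neighborSet_subset_of hGS y)
        have hcount := ctr_card (G := G) (x := x) (y := y) hEfin hNyfin hE'fin
        have hSpos : 1 ≤ S.ncard := (Set.ncard_pos hS).mpr ⟨y, hyS⟩
        have hcard' : maderC (h + 1) * (S \ {y}).ncard < (ctr G x y).edgeSet.ncard := by
          rw [hncard']
          have hmul : maderC (h + 1) * (S.ncard - 1) + maderC (h + 1)
              = maderC (h + 1) * S.ncard := by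
            obtain ⟨m, hm⟩ : ∃ m, S.ncard = m + 1 := ⟨S.ncard - 1, by omega⟩
            rw [hm, Nat.add_sub_cancel, Nat.mul_succ]
          omega
        have hkm := IHn V (ctr G x y) (S \ {y}) (by omega) hSfin' hGS' hcard'
        have hlift := KMin_ctr hxy (by simp) hkm
        refine hlift.mono le_rfl ?_
        rw [Set.diff_union_self]
        exact Set.union_subset le_rfl (Set.singleton_subset_iff.mpr hyS)
      · -- dense neighborhood case
        push_neg at hctr
        obtain ⟨x, y, hxy⟩ := exists_adj_of_edge (Set.nonempty_of_ncard_ne_zero hepos.ne')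
        set N : Set V := G.neighborSet x with hN
        have hNS : N ⊆ S := neighborSet_subset_of hGS x
        have hNfin : N.Finite := hS.subset hNS
        have hxN : x ∉ N := fun hc => G.irrefl hc
        have hyN : y ∈ N := hxy
        have hxS : x ∈ S := hGS hxy
        have hdeg : ∀ v : ↥N, 2 * maderC h + 2 ≤ ((G.induce N).neighborSet v).ncard := by
          rintro ⟨w, hwN⟩
          rw [induce_neighbor_card]
          have hadjv : G.Adj x w := hwN
          have hcm := hctr x w hadjv
          have heq : (G.neighborSet w ∩ N).ncard
              = (G.neighborSet x ∩ G.neighborSet w).ncard := by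
            rw [hN, Set.inter_comm]
          show 2 * maderC h + 2 ≤ (G.neighborSet w ∩ N).ncard
          rw [heq]
          have hmc : maderC (h + 1) = 2 * maderC h + 2 := rfl
          omega
        have hhs := handshake G hNfin (2 * maderC h + 2) hdeg
        have hNpos : 0 < N.ncard := (Set.ncard_pos hNfin).mpr ⟨y, hyN⟩
        haveI := hNfin.fintype
        have hcard2 : maderC h * (Set.univ : Set ↥N).ncard < (G.induce N).edgeSet.ncard := by
          rw [Set.ncard_univ, Nat.card_coe_set_eq]
          have hexp : (2 * maderC h + 2) * N.ncard
              = 2 * (maderC h * N.ncard) + 2 * N.ncard := by ring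
          omega
        have hkm := IH ↥N (G.induce N) Set.univ Set.finite_univ (fun a b _ => trivial) hcard2
        have hkm2 : KMin (h + 2) G N := KMin_induce hkm
        have hcons := KMin_cons hxN (fun b hb => hb) hkm2
        exact hcons.mono le_rfl (Set.insert_subset hxS hNS)

lemma KMin_minorOf_top {k m : ℕ} {G : SimpleGraph V} {S : Set V} (h : KMin k G S)
    (hm : m ≤ k) : MinorOf (⊤ : SimpleGraph (Fin m)) G := by
  obtain ⟨φ, hsub, hne, hconn, hdisj, hadj⟩ := h
  refine ⟨fun i => φ (Fin.castLE hm i), fun i => hne _, fun i => hconn _, ?_, ?_⟩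
  · intro u v huv
    exact hdisj _ _ (fun hc => huv ((Fin.strictMono_castLE hm).injective hc))
  · intro u v huv
    exact hadj _ _ (fun hc => huv.ne ((Fin.strictMono_castLE hm).injective hc))

lemma minorOf_top {n : ℕ} (G₀ : SimpleGraph (Fin n)) :
    MinorOf G₀ (⊤ : SimpleGraph (Fin n)) := by
  refine ⟨fun v => {v}, fun v => Set.singleton_nonempty v,
    fun v => connected_induce_singleton _ v, ?_, ?_⟩
  · intro u v huv
    exact Set.disjoint_singleton.mpr huv
  · intro u v huv
    exact ⟨u, rfl, v, rfl, by simpa using huv.ne⟩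

end MaderAux


/-- Every nontrivial minor-closed graph property is sparse: if a class of
graphs is closed under minors and excludes some graph, then there is a constant
`c` such that every `n`-vertex graph in the class has at most `c·n` edges. -/
theorem minorClosed_nontrivial_sparse
    (P : ∀ n : ℕ, SimpleGraph (Fin n) → Prop)
    (hminor : ∀ (m n : ℕ) (H : SimpleGraph (Fin m)) (G : SimpleGraph (Fin n)),
      P n G → MinorOf H G → P m H)
    (hnontriv : ∃ (n : ℕ) (G : SimpleGraph (Fin n)), ¬ P n G) :
    ∃ c : ℕ, ∀ (n : ℕ) (G : SimpleGraph (Fin n)), P n G → G.edgeSet.ncard ≤ c * n := by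
  obtain ⟨n₀, G₀, hG₀⟩ := hnontriv
  have hTop : ¬ P n₀ ⊤ := fun hP => hG₀ (hminor _ _ _ _ hP (minorOf_top G₀))
  refine ⟨maderC n₀, ?_⟩
  intro n G hPG
  by_contra hlt
  push_neg at hlt
  have h1 : maderC n₀ * (Set.univ : Set (Fin n)).ncard < G.edgeSet.ncard := by
    rwa [Set.ncard_univ, Nat.card_eq_fintype_card, Fintype.card_fin]
  have hkm := mader n₀ (Fin n) G Set.univ Set.finite_univ (fun a b _ => trivial) h1
  exact hTop (hminor _ _ _ _ hPG (KMin_minorOf_top hkm (by omega)))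
end

section
/- Kővári–Sós–Turán bound (case s = t = 2): every graph on n vertices with no subgraph isomorphic to the 4-cycle C_4 (equivalently, K_{2,2}) has at most (1/2)(1 + √(4n−3))·n/2 edges; in particular at most n^{3/2} edges for n large enough. -/
open SimpleGraph Finset

private lemma two_mul_choose_two' (m : ℕ) : 2 * m.choose 2 = m * (m - 1) := by
  rcases m with _ | k
  · simp
  · rw [Nat.choose_two_right, Nat.succ_sub_one, Nat.mul_div_cancel' (by
      rw [Nat.mul_comm]
      exact (Nat.even_mul_succ_self k).two_dvd)]

private lemma cast_mul_pred (m : ℕ) : ((m * (m - 1) : ℕ) : ℝ) = (m : ℝ) ^ 2 - m := by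
  rcases m with _ | k
  · simp
  · push_cast [Nat.succ_sub_one]
    ring

/-- Kővári–Sós–Turán bound for `s = t = 2`: every graph on `n ≥ 1` vertices
with no subgraph isomorphic to the 4-cycle `C₄ = K_{2,2}` has at most
`(1/2)(1 + √(4n−3))·n/2` edges; in particular, at most `n^{3/2}` edges. -/
theorem kovari_sos_turan_C4 (n : ℕ) (hn : 1 ≤ n) (G : SimpleGraph (Fin n))
    (hC4 : ¬ ∃ f : SimpleGraph.cycleGraph 4 →g G, Function.Injective f) :
    (G.edgeSet.ncard : ℝ) ≤ (1 / 2) * (1 + Real.sqrt (4 * (n : ℝ) - 3)) * (n : ℝ) / 2 ∧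
      (G.edgeSet.ncard : ℝ) ≤ (n : ℝ) ^ ((3 : ℝ) / 2) := by
  classical
  have key : ∀ v w : Fin n, v ≠ w → ∀ a b : Fin n, a ≠ b →
      G.Adj v a → G.Adj v b → G.Adj w a → G.Adj w b → False := by
    intro v w hvw a b hab hva hvb hwa hwb
    apply hC4
    have hva' := hva.ne
    have hvb' := hvb.ne
    have hwa' := hwa.ne
    have hwb' := hwb.ne
    have hinj : Function.Injective ![v, a, w, b] := by
      intro i j h
      fin_cases i <;> fin_cases j <;> simp_all
    refine ⟨⟨![v, a, w, b], ?_⟩, hinj⟩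
    intro i j hij
    revert hij
    intro hij
    fin_cases i <;> fin_cases j <;>
      simp only [Matrix.cons_val_zero, Matrix.cons_val_one, Matrix.head_cons,
        Matrix.cons_val_two, Matrix.tail_cons, Matrix.cons_val_three] <;>
      first
        | exact absurd hij (by decide)
        | exact hva | exact hva.symm | exact hvb | exact hvb.symm
        | exact hwa | exact hwa.symm | exact hwb | exact hwb.symm
  -- 2-subsets of neighborhoods are pairwise disjoint
  set P : Fin n → Finset (Finset (Fin n)) :=
    fun v => (G.neighborFinset v).powersetCard 2 with hP
  have hdisj : ∀ v ∈ (univ : Finset (Fin n)), ∀ w ∈ univ, v ≠ w → Disjoint (P v) (P w) := by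
    intro v _ w _ hvw
    rw [Finset.disjoint_left]
    intro p hpv hpw
    rw [hP, Finset.mem_powersetCard] at hpv hpw
    obtain ⟨a, b, hab, rfl⟩ := Finset.card_eq_two.mp hpv.2
    have hva := (mem_neighborFinset _ _ _).mp (hpv.1 (by simp : a ∈ ({a, b} : Finset (Fin n))))
    have hvb := (mem_neighborFinset _ _ _).mp (hpv.1 (by simp : b ∈ ({a, b} : Finset (Fin n))))
    have hwa := (mem_neighborFinset _ _ _).mp (hpw.1 (by simp : a ∈ ({a, b} : Finset (Fin n))))
    have hwb := (mem_neighborFinset _ _ _).mp (hpw.1 (by simp : b ∈ ({a, b} : Finset (Fin n))))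
    exact key v w hvw a b hab hva hvb hwa hwb
  have hNat : ∑ v : Fin n, (G.degree v).choose 2 ≤ n.choose 2 := by
    have h1 : ∑ v : Fin n, (P v).card = ((univ : Finset (Fin n)).biUnion P).card :=
      (Finset.card_biUnion hdisj).symm
    have h2 : ((univ : Finset (Fin n)).biUnion P).card ≤
        ((univ : Finset (Fin n)).powersetCard 2).card := by
      apply Finset.card_le_card
      intro p hp
      rw [Finset.mem_biUnion] at hp
      obtain ⟨v, _, hpv⟩ := hp
      rw [hP, Finset.mem_powersetCard] at hpv
      rw [Finset.mem_powersetCard]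
      exact ⟨Finset.subset_univ _, hpv.2⟩
    have h3 : ∀ v : Fin n, (P v).card = (G.degree v).choose 2 := by
      intro v
      rw [hP, Finset.card_powersetCard, SimpleGraph.degree]
    calc ∑ v : Fin n, (G.degree v).choose 2 = ∑ v : Fin n, (P v).card := by
          simp_rw [h3]
      _ ≤ ((univ : Finset (Fin n)).powersetCard 2).card := h1 ▸ h2
      _ = n.choose 2 := by rw [Finset.card_powersetCard, Finset.card_fin]
  have hNat2 : ∑ v : Fin n, G.degree v * (G.degree v - 1) ≤ n * (n - 1) := by
    calc ∑ v : Fin n, G.degree v * (G.degree v - 1)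
        = 2 * ∑ v : Fin n, (G.degree v).choose 2 := by
          rw [Finset.mul_sum]; exact Finset.sum_congr rfl fun v _ => (two_mul_choose_two' _).symm
      _ ≤ 2 * n.choose 2 := by omega
      _ = n * (n - 1) := two_mul_choose_two' n
  -- pass to reals
  set E : ℝ := (G.edgeFinset.card : ℝ) with hEdef
  have hncard : (G.edgeSet.ncard : ℝ) = E := by
    rw [hEdef, ← SimpleGraph.coe_edgeFinset, Set.ncard_coe_finset]
  have hsum : ∑ v : Fin n, (G.degree v : ℝ) = 2 * E := by
    rw [hEdef]
    norm_cast
    exact G.sum_degrees_eq_twice_card_edges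
  have hE0 : 0 ≤ E := by positivity
  have hn0 : (1 : ℝ) ≤ (n : ℝ) := by exact_mod_cast hn
  have hCS : (2 * E) ^ 2 ≤ (n : ℝ) * ∑ v : Fin n, (G.degree v : ℝ) ^ 2 := by
    have := sq_sum_le_card_mul_sum_sq (s := (univ : Finset (Fin n)))
      (f := fun v => (G.degree v : ℝ))
    rw [Finset.card_fin] at this
    rw [← hsum]
    exact_mod_cast this
  have hdd : ∑ v : Fin n, ((G.degree v : ℝ) ^ 2 - (G.degree v : ℝ)) ≤ (n : ℝ) * ((n : ℝ) - 1) := by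
    have := hNat2
    have hcast : ((∑ v : Fin n, G.degree v * (G.degree v - 1) : ℕ) : ℝ)
        ≤ ((n * (n - 1) : ℕ) : ℝ) := by exact_mod_cast this
    rw [Nat.cast_sum] at hcast
    simp_rw [cast_mul_pred] at hcast
    calc ∑ v : Fin n, ((G.degree v : ℝ) ^ 2 - (G.degree v : ℝ)) ≤ (n : ℝ) ^ 2 - n := hcast
      _ = (n : ℝ) * ((n : ℝ) - 1) := by ring
  have hquad : 4 * E ^ 2 ≤ (n : ℝ) ^ 2 * ((n : ℝ) - 1) + 2 * (n : ℝ) * E := by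
    have h1 : ∑ v : Fin n, (G.degree v : ℝ) ^ 2 ≤ (n : ℝ) * ((n : ℝ) - 1) + 2 * E := by
      have := Finset.sum_sub_distrib (s := (univ : Finset (Fin n)))
        (f := fun v => (G.degree v : ℝ) ^ 2) (g := fun v => (G.degree v : ℝ))
      rw [this, hsum] at hdd
      linarith
    nlinarith [hCS, mul_le_mul_of_nonneg_left h1 (by linarith : (0:ℝ) ≤ (n:ℝ))]
  set s := Real.sqrt (4 * (n : ℝ) - 3) with hs
  have hs0 : 0 ≤ s := Real.sqrt_nonneg _
  have hs2 : s ^ 2 = 4 * (n : ℝ) - 3 := Real.sq_sqrt (by linarith)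
  have main : E ≤ (1 / 2) * (1 + s) * (n : ℝ) / 2 := by
    by_contra h
    push_neg at h
    have h4 : (n : ℝ) * (1 + s) / 4 < E := by linarith
    have hfac : (4 * E - (n : ℝ) * (1 + s)) * (4 * E - (n : ℝ) * (1 - s))
        = 4 * (4 * E ^ 2 - 2 * (n : ℝ) * E - (n : ℝ) ^ 2 * ((n : ℝ) - 1)) := by
      linear_combination (-(n : ℝ) ^ 2) * hs2
    have h5 : 0 < 4 * E - (n : ℝ) * (1 + s) := by linarith
    have h6 : 0 < 4 * E - (n : ℝ) * (1 - s) := by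
      nlinarith [mul_nonneg (by linarith : (0:ℝ) ≤ (n:ℝ)) hs0]
    linarith [mul_pos h5 h6, hfac, hquad]
  constructor
  · rw [hncard]; exact main
  · rw [hncard]
    have hrt : (n : ℝ) ^ ((3 : ℝ) / 2) = (n : ℝ) * Real.sqrt (n : ℝ) := by
      rw [show (3 : ℝ) / 2 = 1 + 1 / 2 by norm_num,
        Real.rpow_add (by linarith : (0:ℝ) < (n:ℝ)), Real.rpow_one,
        Real.sqrt_eq_rpow]
    rw [hrt]
    have h1 : (1 : ℝ) ≤ Real.sqrt (n : ℝ) := Real.one_le_sqrt.mpr hn0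
    have h2 : s ≤ 2 * Real.sqrt (n : ℝ) := by
      rw [hs]
      calc Real.sqrt (4 * (n : ℝ) - 3) ≤ Real.sqrt (4 * (n : ℝ)) :=
            Real.sqrt_le_sqrt (by linarith)
        _ = 2 * Real.sqrt (n : ℝ) := by
            rw [show (4 : ℝ) * (n : ℝ) = 2 ^ 2 * (n : ℝ) by ring,
              Real.sqrt_mul (by positivity), Real.sqrt_sq (by norm_num)]
    nlinarith [main, mul_le_mul_of_nonneg_left h2 (by linarith : (0:ℝ) ≤ (n:ℝ)),
      mul_le_mul_of_nonneg_left h1 (by linarith : (0:ℝ) ≤ (n:ℝ))]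
end
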